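/- arXiv:1504.01529 — 9 statements merged into one kernel-verified Lean document; each statement's English description precedes it below -/
import Mathlib

section
/- Let μ : [0,1] → ℝ be continuous and nonnegative with μ(0) > 0 and μ(1) > 0, and let θ ∈ (π/2, π). Then there exists θ' ∈ (π/2, π), depending only on μ and θ, such that for every z ∈ Σ_θ one has z·w(z) ∈ Σ_{θ'}, i.e. z·w(z) ≠ 0 and |arg(z·w(z))| < θ'. -/
open Real MeasureTheory

/-- `w μ z = ∫₀¹ z^(α-1) μ(α) dα`, using the principal branch complex power. -/
noncomputable def w (μ : ℝ → ℝ) (z : ℂ) : ℂ :=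
  ∫ α in (0:ℝ)..1, z ^ ((α : ℂ) - 1) * (μ α : ℂ)

lemma aux_pos_integral {f : ℝ → ℝ} (hf : ContinuousOn f (Set.Icc 0 1))
    (hnn : ∀ x ∈ Set.Icc (0:ℝ) 1, 0 ≤ f x) (h0 : 0 < f 0) :
    0 < ∫ x in (0:ℝ)..1, f x := by
  obtain ⟨δ, hδ, hδ'⟩ := Metric.continuousWithinAt_iff.1 (hf 0 (by norm_num)) (f 0) h0
  set b := min (δ/2) 1 with hb
  have hb0 : 0 < b := lt_min (by linarith) one_pos
  have hb1 : b ≤ 1 := min_le_right _ _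
  have hint : ∀ p q : ℝ, p ∈ Set.Icc (0:ℝ) 1 → q ∈ Set.Icc (0:ℝ) 1 →
      IntervalIntegrable f volume p q := fun p q hp hq =>
    (hf.mono (Set.uIcc_subset_Icc hp hq)).intervalIntegrable
  have h1 : 0 < ∫ x in (0:ℝ)..b, f x := by
    refine intervalIntegral.intervalIntegral_pos_of_pos_on
      (hint 0 b (by norm_num) ⟨hb0.le, hb1⟩) ?_ hb0
    intro x hx
    have hxI : x ∈ Set.Icc (0:ℝ) 1 := ⟨hx.1.le, hx.2.le.trans hb1⟩
    have hd : dist x 0 < δ := by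
      rw [Real.dist_eq, sub_zero, abs_of_pos hx.1]
      calc x < b := hx.2
        _ ≤ δ/2 := min_le_left _ _
        _ < δ := by linarith
    have h5 := hδ' hxI hd
    rw [Real.dist_eq] at h5
    have h6 := abs_lt.1 h5
    linarith [h6.1]
  have h2 : 0 ≤ ∫ x in b..1, f x :=
    intervalIntegral.integral_nonneg hb1 fun x hx => hnn x ⟨hb0.le.trans hx.1, hx.2⟩
  have h3 := intervalIntegral.integral_add_adjacent_intervals
    (hint 0 b (by norm_num) ⟨hb0.le, hb1⟩) (hint b 1 ⟨hb0.le, hb1⟩ (by norm_num))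
  linarith

theorem stmt_0 (μ : ℝ → ℝ) (hc : ContinuousOn μ (Set.Icc 0 1))
    (hnn : ∀ α ∈ Set.Icc (0:ℝ) 1, 0 ≤ μ α) (h0 : 0 < μ 0) (h1 : 0 < μ 1)
    (θ : ℝ) (hθ : θ ∈ Set.Ioo (π / 2) π) :
    ∃ θ' ∈ Set.Ioo (π / 2) π, ∀ z : ℂ, z ≠ 0 → |z.arg| < θ →
      z * w μ z ≠ 0 ∧ |(z * w μ z).arg| < θ' := by
  obtain ⟨hθ1, hθ2⟩ := hθ
  have hπ := Real.pi_pos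
  refine ⟨θ/2 + π/2, ⟨by linarith, by linarith⟩, ?_⟩
  intro z hz hargz
  set φ := z.arg with hφ
  have hφπ : |φ| < π := hargz.trans hθ2
  have hφ2 : |φ/2| < π/2 := by
    rw [abs_div, abs_two]; linarith
  -- continuity and integrability of the integrand
  have hcpow : (fun α : ℝ => z ^ (α:ℂ)) = fun α : ℝ => Complex.exp (Complex.log z * (α:ℂ)) := by
    funext α; rw [Complex.cpow_def_of_ne_zero hz, mul_comm]
  have hcont : ContinuousOn (fun α : ℝ => z ^ (α:ℂ) * (μ α : ℂ)) (Set.Icc 0 1) := by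
    apply ContinuousOn.mul _ (Complex.continuous_ofReal.comp_continuousOn hc)
    apply Continuous.continuousOn
    rw [hcpow]
    exact Complex.continuous_exp.comp (continuous_const.mul Complex.continuous_ofReal)
  have hint : IntervalIntegrable (fun α : ℝ => z ^ (α:ℂ) * (μ α : ℂ)) volume 0 1 :=
    (hcont.mono (by rw [Set.uIcc_of_le (by norm_num : (0:ℝ) ≤ 1)])).intervalIntegrable
  -- z * w = ∫ z^α μ α
  set I1 : ℂ := ∫ α in (0:ℝ)..1, z ^ (α:ℂ) * (μ α : ℂ) with hI1
  have hzw : z * w μ z = I1 := by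
    rw [w, ← intervalIntegral.integral_const_mul, hI1]
    apply intervalIntegral.integral_congr
    intro α _
    have hmul : z ^ ((α:ℂ)-1) * z = z ^ (α:ℂ) := by
      conv_rhs => rw [show (α:ℂ) = ((α:ℂ)-1)+1 by ring]
      rw [Complex.cpow_add _ _ hz, Complex.cpow_one]
    simp only
    rw [← mul_assoc, mul_comm z (z ^ ((α:ℂ)-1)), hmul]
  set c : ℂ := Complex.exp (-(↑(φ/2)) * Complex.I) with hcdef
  -- pointwise real part formula
  set g : ℝ → ℝ := fun α => μ α *
      (Real.exp (α * Real.log (‖z‖)) * Real.cos (φ * (α - 1/2))) with hg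
  have hpt : ∀ α : ℝ, (c * (z ^ (α:ℂ) * (μ α : ℂ))).re = g α := by
    intro α
    rw [hcdef, Complex.cpow_def_of_ne_zero hz, ← mul_assoc, ← Complex.exp_add]
    have hW : -(↑(φ/2)) * Complex.I + Complex.log z * (α:ℂ)
        = Complex.ofReal (α * Real.log (‖z‖))
          + Complex.ofReal (φ * (α - 1/2)) * Complex.I := by
      apply Complex.ext <;>
        simp [Complex.log_re, Complex.log_im, ← hφ] <;> ring
    rw [hW]
    simp [Complex.exp_re, Complex.mul_re, Complex.exp_im, hg]
    ring
  -- bounds for the cosine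
  have hcos_nonneg : ∀ x ∈ Set.Icc (0:ℝ) 1, 0 ≤ Real.cos (φ * (x - 1/2)) := by
    intro x hx
    apply Real.cos_nonneg_of_mem_Icc
    have h2 : |x - 1/2| ≤ 1/2 := by
      rw [abs_le]; constructor <;> [linarith [hx.1]; linarith [hx.2]]
    have habs : |φ * (x - 1/2)| ≤ π/2 := by
      rw [abs_mul]
      calc |φ| * |x - 1/2| ≤ π * (1/2) :=
        mul_le_mul hφπ.le h2 (abs_nonneg _) hπ.le
        _ = π/2 := by ring
    have h7 := abs_le.1 habs
    exact ⟨by linarith [h7.1], h7.2⟩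
  -- positivity of Re (c * I1)
  have hckey : 0 < (c * I1).re := by
    have h1' : c * I1 = ∫ α in (0:ℝ)..1, c * (z ^ (α:ℂ) * (μ α : ℂ)) :=
      (intervalIntegral.integral_const_mul c _).symm
    have h2' : (∫ α in (0:ℝ)..1, c * (z ^ (α:ℂ) * (μ α : ℂ))).re
        = ∫ α in (0:ℝ)..1, (c * (z ^ (α:ℂ) * (μ α : ℂ))).re := by
      have h8 := Complex.reCLM.intervalIntegral_comp_comm (hint.const_mul c)
      simpa using h8.symm
    have h3' : (fun α : ℝ => (c * (z ^ (α:ℂ) * (μ α : ℂ))).re) = g := funext hpt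
    rw [h1', h2', h3']
    refine aux_pos_integral ?_ ?_ ?_
    · apply hc.mul
      apply Continuous.continuousOn
      exact (Real.continuous_exp.comp (continuous_id.mul continuous_const)).mul
        (Real.continuous_cos.comp (continuous_const.mul (continuous_id.sub continuous_const)))
    · intro x hx
      exact mul_nonneg (hnn x hx)
        (mul_nonneg (Real.exp_pos _).le (hcos_nonneg x hx))
    · have hcos0 : 0 < Real.cos (φ * ((0:ℝ) - 1/2)) := by
        apply Real.cos_pos_of_mem_Ioo
        have h9 := abs_lt.1 hφ2
        rw [show φ * ((0:ℝ) - 1/2) = -(φ/2) by ring]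
        exact ⟨by linarith [h9.2], by linarith [h9.1]⟩
      show 0 < μ 0 * (Real.exp ((0:ℝ) * Real.log (‖z‖)) * Real.cos (φ * ((0:ℝ) - 1/2)))
      rw [zero_mul, Real.exp_zero, one_mul]
      exact mul_pos h0 hcos0
  -- conclude
  have hu0 : c * I1 ≠ 0 := fun h => by simp [h] at hckey
  have hI10 : I1 ≠ 0 := fun h => hu0 (by simp [h])
  have hzw0 : z * w μ z ≠ 0 := hzw ▸ hI10
  refine ⟨hzw0, ?_⟩
  have hargu : |(c * I1).arg| < π/2 :=
    Complex.abs_arg_lt_pi_div_two_iff.2 (Or.inl hckey)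
  have hfact : z * w μ z = Complex.exp (↑(φ/2) * Complex.I) * (c * I1) := by
    rw [hzw, hcdef, ← mul_assoc, ← Complex.exp_add]
    rw [show (↑(φ/2) * Complex.I + -(↑(φ/2)) * Complex.I : ℂ) = 0 by ring]
    rw [Complex.exp_zero, one_mul]
  have hargexp : (Complex.exp (↑(φ/2) * Complex.I)).arg = φ/2 := by
    rw [Complex.exp_mul_I]
    have h9 := abs_lt.1 hφ2
    exact_mod_cast Complex.arg_cos_add_sin_mul_I ⟨by linarith [h9.1], by linarith [h9.2]⟩
  have h9 := abs_lt.1 hφ2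
  have hargu' := abs_lt.1 hargu
  have hargmul : (z * w μ z).arg = φ/2 + (c * I1).arg := by
    rw [hfact, Complex.arg_mul (Complex.exp_ne_zero _) hu0, hargexp]
    rw [hargexp]
    constructor <;> [linarith [hargu'.1]; linarith [hargu'.2]]
  rw [hargmul]
  have habsφ : |φ| < θ := hargz
  have h10 := abs_lt.1 hφ2
  calc |φ/2 + (c * I1).arg| ≤ |φ/2| + |(c * I1).arg| := abs_add_le _ _
    _ < θ/2 + π/2 := by
        have : |φ/2| < θ/2 := by rw [abs_div, abs_two]; linarith
        linarith
end

section
/- Let μ : [0,1] → ℝ be continuous and nonnegative with μ(0) > 0. Then there exists r₀ ∈ (0,1) such that for every z ∈ ℂ with 0 < |z| < r₀ and |arg z| < π, one has Re(z·w(z)) > 0. -/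
open Real MeasureTheory

lemma re_cpow_real (z : ℂ) (hz : z ≠ 0) (α : ℝ) :
    (z ^ (α:ℂ)).re = ‖z‖ ^ α * Real.cos (α * z.arg) := by
  rw [Complex.cpow_def_of_ne_zero hz, Complex.exp_re]
  simp only [Complex.mul_re, Complex.mul_im, Complex.ofReal_re, Complex.ofReal_im,
    Complex.log_re, Complex.log_im, mul_zero, sub_zero, zero_mul, add_zero]
  rw [Real.rpow_def_of_pos (norm_pos_iff.mpr hz)]
  ring_nf

lemma cont_cpow_mul (μ : ℝ → ℝ) (hc : ContinuousOn μ (Set.Icc 0 1)) (z : ℂ) (hz : z ≠ 0) :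
    ContinuousOn (fun α : ℝ => z ^ ((α : ℂ)) * (μ α : ℂ)) (Set.Icc 0 1) := by
  apply ContinuousOn.mul
  · exact (Continuous.const_cpow (Complex.continuous_ofReal) (Or.inl hz)).continuousOn
  · exact Complex.continuous_ofReal.comp_continuousOn hc

lemma re_zw (μ : ℝ → ℝ) (hc : ContinuousOn μ (Set.Icc 0 1)) (z : ℂ) (hz : z ≠ 0) :
    (z * w μ z).re =
      ∫ α in (0:ℝ)..1, ‖z‖ ^ α * (Real.cos (α * z.arg) * μ α) := by
  have key : (fun α : ℝ => z * (z ^ ((α : ℂ) - 1) * (μ α : ℂ)))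
      = fun α : ℝ => z ^ ((α : ℂ)) * (μ α : ℂ) := by
    funext α
    rw [← mul_assoc]
    congr 1
    rw [Complex.cpow_sub _ _ hz, Complex.cpow_one]
    field_simp
  have hint : IntervalIntegrable (fun α : ℝ => z ^ ((α : ℂ)) * (μ α : ℂ)) volume 0 1 := by
    apply ContinuousOn.intervalIntegrable
    have := cont_cpow_mul μ hc z hz
    rwa [Set.uIcc_of_le (zero_le_one)]
  have h1 : z * w μ z = ∫ α in (0:ℝ)..1, z ^ ((α : ℂ)) * (μ α : ℂ) := by
    rw [w, ← intervalIntegral.integral_const_mul, key]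
  have h2 := Complex.reCLM.intervalIntegral_comp_comm hint
  simp only [Complex.reCLM_apply] at h2
  rw [h1, ← h2]
  apply intervalIntegral.integral_congr
  intro α _
  dsimp only
  rw [show (z ^ ((α:ℂ)) * (μ α : ℂ)).re = (z ^ ((α:ℂ))).re * μ α by
    simp [Complex.mul_re], re_cpow_real z hz α, mul_assoc]

set_option maxHeartbeats 1600000 in
theorem stmt_1 (μ : ℝ → ℝ) (hc : ContinuousOn μ (Set.Icc 0 1))
    (hnn : ∀ α ∈ Set.Icc (0:ℝ) 1, 0 ≤ μ α) (h0 : 0 < μ 0) :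
    ∃ r₀ ∈ Set.Ioo (0:ℝ) 1, ∀ z : ℂ, z ≠ 0 → ‖z‖ < r₀ → |z.arg| < π →
      0 < (z * w μ z).re := by
  -- upper bound M for μ
  obtain ⟨C, hC⟩ := (isCompact_Icc (a := (0:ℝ)) (b := 1)).exists_bound_of_continuousOn hc
  set M : ℝ := max C 1 with hMdef
  have hM0 : (0:ℝ) < M := lt_of_lt_of_le one_pos (le_max_right _ _)
  have hMb : ∀ α ∈ Set.Icc (0:ℝ) 1, μ α ≤ M := fun α hα =>
    le_trans (le_trans (le_abs_self _) (hC α hα)) (le_max_left _ _)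
  -- δ where μ ≥ μ 0 / 2
  have hcw : ContinuousWithinAt μ (Set.Icc 0 1) 0 := hc 0 ⟨le_refl _, zero_le_one⟩
  rw [Metric.continuousWithinAt_iff] at hcw
  obtain ⟨δ₁, hδ₁0, hδ₁⟩ := hcw (μ 0 / 2) (by linarith)
  set δ : ℝ := min (δ₁ / 2) (1 / 3) with hδdef
  have hδ0 : 0 < δ := lt_min (by linarith) (by norm_num)
  have hδ3 : δ ≤ 1 / 3 := min_le_right _ _
  have hδ1 : δ ≤ 1 := by linarith
  have hμlb : ∀ α ∈ Set.Icc (0:ℝ) δ, μ 0 / 2 ≤ μ α := by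
    intro α hα
    have hαI : α ∈ Set.Icc (0:ℝ) 1 := ⟨hα.1, le_trans hα.2 hδ1⟩
    have hd : dist α 0 < δ₁ := by
      rw [Real.dist_eq, sub_zero, abs_of_nonneg hα.1]
      have := min_le_left (δ₁ / 2) (1/3 : ℝ)
      linarith [hα.2]
    have := hδ₁ hαI hd
    rw [Real.dist_eq, abs_sub_lt_iff] at this
    linarith [this.2]
  set η : ℝ := δ / 2 with hηdef
  have hη0 : 0 < η := by positivity
  -- choose r₀
  set c : ℝ := η * μ 0 / (8 * M) with hcdef
  have hc0 : 0 < c := by positivity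
  refine ⟨min (1/2) (c ^ (η⁻¹ : ℝ)), ⟨lt_min (by norm_num) (Real.rpow_pos_of_pos hc0 _),
    lt_of_le_of_lt (min_le_left _ _) (by norm_num)⟩, ?_⟩
  intro z hz hzr hzarg
  set r : ℝ := ‖z‖ with hrdef
  set θ : ℝ := z.arg with hθdef
  have hr0 : 0 < r := norm_pos_iff.mpr hz
  have hr1 : r ≤ 1 := by
    have := lt_of_lt_of_le hzr (min_le_left _ _); linarith
  have hθπ : |θ| ≤ π := le_of_lt hzarg
  -- key smallness: r ^ η < c
  have hkey : r ^ (η:ℝ) < c := by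
    have h1 : r ^ (η:ℝ) < (min (1/2) (c ^ (η⁻¹:ℝ))) ^ (η:ℝ) :=
      Real.rpow_lt_rpow hr0.le hzr hη0
    have h2 : (min (1/2) (c ^ (η⁻¹:ℝ))) ^ (η:ℝ) ≤ (c ^ (η⁻¹:ℝ)) ^ (η:ℝ) :=
      Real.rpow_le_rpow (le_min (by norm_num) (Real.rpow_pos_of_pos hc0 _).le)
        (min_le_right _ _) hη0.le
    rw [Real.rpow_inv_rpow hc0.le hη0.ne'] at h2
    linarith
  -- the real integrand
  set f : ℝ → ℝ := fun α => r ^ α * (Real.cos (α * θ) * μ α) with hfdef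
  have hrc : Continuous fun α : ℝ => r ^ (α:ℝ) :=
    continuous_iff_continuousAt.mpr fun x => Real.continuousAt_const_rpow hr0.ne'
  have hfc : ContinuousOn f (Set.Icc 0 1) := by
    apply (hrc.continuousOn).mul
    exact ((Real.continuous_cos.comp (continuous_id.mul continuous_const)).continuousOn).mul hc
  have hfi : ∀ a b : ℝ, 0 ≤ a → a ≤ b → b ≤ 1 → IntervalIntegrable f volume a b := by
    intro a b ha hab hb1
    apply ContinuousOn.intervalIntegrable
    apply hfc.mono
    rw [Set.uIcc_of_le hab]
    exact Set.Icc_subset_Icc ha hb1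
  have hηδ : η ≤ δ := by linarith
  have hη1 : η ≤ 1 := by linarith
  -- split
  have hsplit : ∫ α in (0:ℝ)..1, f α =
      (∫ α in (0:ℝ)..η, f α) + (∫ α in η..δ, f α) + (∫ α in δ..(1:ℝ), f α) := by
    rw [intervalIntegral.integral_add_adjacent_intervals (hfi 0 η le_rfl hη0.le hη1)
      (hfi η δ hη0.le hηδ hδ1),
      intervalIntegral.integral_add_adjacent_intervals (hfi 0 δ le_rfl hδ0.le hδ1)
      (hfi δ 1 hδ0.le hδ1 le_rfl)]
  -- cos lower bound on [0, δ]
  have hcos : ∀ α ∈ Set.Icc (0:ℝ) δ, (1:ℝ)/2 ≤ Real.cos (α * θ) := by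
    intro α hα
    have habs : |α * θ| ≤ π / 3 := by
      rw [abs_mul, abs_of_nonneg hα.1]
      calc α * |θ| ≤ δ * π := by
            apply mul_le_mul hα.2 hθπ (abs_nonneg _) hδ0.le
        _ ≤ π / 3 := by nlinarith [Real.pi_pos]
    have := Real.cos_le_cos_of_nonneg_of_le_pi (abs_nonneg (α * θ))
      (by linarith [Real.pi_pos] : π/3 ≤ π) habs
    rw [Real.cos_pi_div_three] at this
    rwa [Real.cos_abs] at this
  -- bound 1: ∫₀^η f ≥ η * (r^η * (1/2 * (μ 0 / 2)))
  have hb1 : η * (r ^ (η:ℝ) * (1/2 * (μ 0 / 2))) ≤ ∫ α in (0:ℝ)..η, f α := by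
    have := intervalIntegral.integral_mono_on hη0.le
      (intervalIntegrable_const (c := r ^ (η:ℝ) * (1/2 * (μ 0 / 2))))
      (hfi 0 η le_rfl hη0.le hη1) ?_
    · rwa [intervalIntegral.integral_const, sub_zero, smul_eq_mul] at this
    · intro α hα
      have hαδ : α ∈ Set.Icc (0:ℝ) δ := ⟨hα.1, le_trans hα.2 hηδ⟩
      have h1 : r ^ (η:ℝ) ≤ r ^ α := Real.rpow_le_rpow_of_exponent_ge hr0 hr1 hα.2
      have h2 : (1:ℝ)/2 ≤ Real.cos (α * θ) := hcos α hαδ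
      have h3 : μ 0 / 2 ≤ μ α := hμlb α hαδ
      have h4 : (0:ℝ) ≤ r ^ α := (Real.rpow_pos_of_pos hr0 α).le
      calc r ^ (η:ℝ) * (1/2 * (μ 0 / 2)) ≤ r ^ (η:ℝ) * (Real.cos (α * θ) * μ α) := by
            apply mul_le_mul_of_nonneg_left _ (Real.rpow_pos_of_pos hr0 η).le
            exact mul_le_mul h2 h3 (by linarith) (by linarith)
        _ ≤ r ^ α * (Real.cos (α * θ) * μ α) := by
            apply mul_le_mul_of_nonneg_right h1
            have : 0 ≤ μ α := hnn α ⟨hαδ.1, le_trans hαδ.2 hδ1⟩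
            nlinarith
  -- bound 2: middle nonneg
  have hb2 : 0 ≤ ∫ α in η..δ, f α := by
    apply intervalIntegral.integral_nonneg hηδ
    intro α hα
    have hαδ : α ∈ Set.Icc (0:ℝ) δ := ⟨le_trans hη0.le hα.1, hα.2⟩
    have h2 := hcos α hαδ
    have h3 : 0 ≤ μ α := hnn α ⟨hαδ.1, le_trans hαδ.2 hδ1⟩
    have h4 : (0:ℝ) ≤ r ^ α := (Real.rpow_pos_of_pos hr0 α).le
    have : (0:ℝ) ≤ Real.cos (α * θ) * μ α := mul_nonneg (by linarith) h3
    exact mul_nonneg h4 this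
  -- bound 3: tail
  have hb3 : (1 - δ) * (-(M * r ^ (δ:ℝ))) ≤ ∫ α in δ..(1:ℝ), f α := by
    have := intervalIntegral.integral_mono_on hδ1
      (intervalIntegrable_const (c := -(M * r ^ (δ:ℝ))))
      (hfi δ 1 hδ0.le hδ1 le_rfl) ?_
    · rwa [intervalIntegral.integral_const, smul_eq_mul] at this
    · intro α hα
      have hαI : α ∈ Set.Icc (0:ℝ) 1 := ⟨le_trans hδ0.le hα.1, hα.2⟩
      have h3 : 0 ≤ μ α := hnn α hαI
      have h4 : (0:ℝ) < r ^ α := Real.rpow_pos_of_pos hr0 α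
      have h5 : r ^ α ≤ r ^ (δ:ℝ) := Real.rpow_le_rpow_of_exponent_ge hr0 hr1 hα.1
      have h6 : μ α ≤ M := hMb α hαI
      have h7 : Real.cos (α * θ) * μ α ≥ -μ α := by
        nlinarith [Real.neg_one_le_cos (α * θ)]
      have h8 : r ^ α * (Real.cos (α * θ) * μ α) ≥ r ^ α * (-μ α) :=
        mul_le_mul_of_nonneg_left h7 h4.le
      have h9 : r ^ α * μ α ≤ r ^ (δ:ℝ) * M :=
        mul_le_mul h5 h6 h3 (Real.rpow_pos_of_pos hr0 δ).le
      simp only [hfdef]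
      nlinarith
  -- assemble
  rw [re_zw μ hc z hz]
  have hre : ∫ α in (0:ℝ)..1, r ^ α * (Real.cos (α * θ) * μ α) = ∫ α in (0:ℝ)..1, f α := rfl
  rw [hre, hsplit]
  set P : ℝ := r ^ (η:ℝ) with hPdef
  have hrη0 : (0:ℝ) < P := Real.rpow_pos_of_pos hr0 η
  have hrδ : r ^ (δ:ℝ) = P * P := by
    rw [hPdef, ← Real.rpow_add hr0]; congr 1; rw [hηdef]; ring
  have h8M : (0:ℝ) < 8 * M := by linarith
  have hck : P * (8 * M) < η * μ 0 := by
    have : P < η * μ 0 / (8 * M) := hkey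
    rw [lt_div_iff₀ h8M] at this
    linarith
  have t2 : M * (P * P) < η * μ 0 * P / 8 := by nlinarith [hck, hrη0]
  have hMrδ : (0:ℝ) ≤ M * r ^ (δ:ℝ) := by positivity
  rw [hrδ] at hb3 hMrδ
  have hI3 : -(M * (P * P)) ≤ ∫ α in δ..(1:ℝ), f α := by
    have h10 : -(M * (P * P)) ≤ (1 - δ) * (-(M * (P * P))) := by nlinarith [hδ0.le, hMrδ]
    linarith [hb3, h10]
  have hpos : 0 < η * (P * (1/2 * (μ 0 / 2))) - M * (P * P) := by nlinarith [t2, hrη0, hη0, h0]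
  linarith [hb1, hb2, hI3]
end

section
/- Let μ : [0,1] → ℝ be continuous and nonnegative with μ(1) > 0, let θ ∈ (π/2, π) and r₀ ∈ (0,1). Then there exists c' > 0, depending only on μ, θ and r₀, such that for every z = r·e^{iφ} with r ≥ r₀ and φ ∈ [π/2, θ], one has |Im(z·w(z))| ≥ c' · |Re(z·w(z))|. -/
open Real MeasureTheory

private lemma aux_sin_lower {θ : ℝ} (hθ1 : π / 2 < θ) (hθ2 : θ < π) {x : ℝ}
    (hx1 : π / 4 ≤ x) (hx2 : x ≤ θ) :
    min (Real.sin (π / 4)) (Real.sin θ) ≤ Real.sin x := by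
  have hpi := Real.pi_pos
  rcases le_or_gt x (π / 2) with h | h
  · refine le_trans (min_le_left _ _) ?_
    exact Real.strictMonoOn_sin.monotoneOn ⟨by linarith, by linarith⟩
      ⟨by linarith, by linarith⟩ hx1
  · refine le_trans (min_le_right _ _) ?_
    rw [← Real.sin_pi_sub x, ← Real.sin_pi_sub θ]
    exact Real.strictMonoOn_sin.monotoneOn ⟨by linarith, by linarith⟩
      ⟨by linarith, by linarith⟩ (by linarith)

private lemma aux_neg_cos_le {θ : ℝ} (hθ1 : π / 2 < θ) (hθ2 : θ < π) {x : ℝ}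
    (hx1 : 0 ≤ x) (hx2 : x ≤ θ) :
    -Real.cos x ≤ (-Real.cos θ / Real.sin θ) * Real.sin x := by
  have hs : 0 < Real.sin θ := Real.sin_pos_of_pos_of_lt_pi (by linarith [Real.pi_pos]) hθ2
  have h0 : 0 ≤ Real.sin (θ - x) :=
    Real.sin_nonneg_of_nonneg_of_le_pi (by linarith) (by linarith)
  rw [Real.sin_sub] at h0
  rw [div_mul_eq_mul_div, le_div_iff₀ hs]
  nlinarith

private lemma aux_cos_le_sin {θ : ℝ} (hθ2 : θ < π) {x : ℝ}
    (hx1 : π / 4 ≤ x) (hx2 : x ≤ θ) : Real.cos x ≤ Real.sin x := by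
  have hpi := Real.pi_pos
  have h0 : 0 ≤ Real.sin (x - π / 4) :=
    Real.sin_nonneg_of_nonneg_of_le_pi (by linarith) (by linarith)
  rw [Real.sin_sub, Real.cos_pi_div_four, Real.sin_pi_div_four] at h0
  have h2 : (0:ℝ) < Real.sqrt 2 / 2 := by positivity
  nlinarith

private lemma aux_B_pos (μ : ℝ → ℝ) (hc : ContinuousOn μ (Set.Icc 0 1))
    (hnn : ∀ α ∈ Set.Icc (0:ℝ) 1, 0 ≤ μ α) (h1 : 0 < μ 1) :
    0 < ∫ α in (1/2:ℝ)..1, μ α := by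
  have hcw : ContinuousWithinAt μ (Set.Icc 0 1) 1 := hc 1 ⟨by norm_num, le_refl 1⟩
  rw [Metric.continuousWithinAt_iff] at hcw
  obtain ⟨δ, hδ, hδ'⟩ := hcw (μ 1 / 2) (by linarith)
  set a : ℝ := max (1/2) (1 - δ/2) with ha_def
  have ha1 : a < 1 := max_lt (by norm_num) (by linarith)
  have ha2 : (1/2 : ℝ) ≤ a := le_max_left _ _
  have hmem : ∀ x ∈ Set.Icc a 1, μ 1 / 2 ≤ μ x := by
    intro x hx
    rcases le_or_gt (1 - δ/2) x with h | h
    · have hx01 : x ∈ Set.Icc (0:ℝ) 1 := ⟨by linarith [hx.1], hx.2⟩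
      have hd : dist x 1 < δ := by
        rw [Real.dist_eq, abs_lt]; constructor <;> linarith [hx.2]
      have := hδ' hx01 hd
      rw [Real.dist_eq, abs_lt] at this
      linarith [this.1]
    · exfalso; exact absurd (le_trans (le_max_right _ _) hx.1) (not_le.mpr h)
  have hInt1 : IntervalIntegrable μ volume (1/2) a :=
    (hc.mono (by rw [Set.uIcc_of_le ha2]; intro x hx; exact ⟨by linarith [hx.1], by linarith [hx.2, ha1.le]⟩)).intervalIntegrable
  have hInt2 : IntervalIntegrable μ volume a 1 :=
    (hc.mono (by rw [Set.uIcc_of_le ha1.le]; intro x hx; exact ⟨by linarith [hx.1], hx.2⟩)).intervalIntegrable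
  rw [← intervalIntegral.integral_add_adjacent_intervals hInt1 hInt2]
  have hpos1 : 0 ≤ ∫ α in (1/2:ℝ)..a, μ α := by
    apply intervalIntegral.integral_nonneg ha2
    intro x hx; exact hnn x ⟨by linarith [hx.1], by linarith [hx.2, ha1.le]⟩
  have hpos2 : (1 - a) * (μ 1 / 2) ≤ ∫ α in a..(1:ℝ), μ α := by
    have := intervalIntegral.integral_mono_on ha1.le
      (intervalIntegrable_const (c := μ 1 / 2)) hInt2 hmem
    rwa [intervalIntegral.integral_const, smul_eq_mul] at this
  nlinarith

set_option maxHeartbeats 1000000 in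
theorem stmt_2 (μ : ℝ → ℝ) (hc : ContinuousOn μ (Set.Icc 0 1))
    (hnn : ∀ α ∈ Set.Icc (0:ℝ) 1, 0 ≤ μ α) (h1 : 0 < μ 1)
    (θ r₀ : ℝ) (hθ : θ ∈ Set.Ioo (π / 2) π) (hr₀ : r₀ ∈ Set.Ioo (0:ℝ) 1) :
    ∃ c' > 0, ∀ r φ : ℝ, r₀ ≤ r → φ ∈ Set.Icc (π / 2) θ →
      c' * |(((r : ℂ) * Complex.exp ((φ : ℂ) * Complex.I)) *
              w μ ((r : ℂ) * Complex.exp ((φ : ℂ) * Complex.I))).re| ≤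
        |(((r : ℂ) * Complex.exp ((φ : ℂ) * Complex.I)) *
              w μ ((r : ℂ) * Complex.exp ((φ : ℂ) * Complex.I))).im| := by
  obtain ⟨hθ1, hθ2⟩ := hθ
  obtain ⟨hr₀0, hr₀1⟩ := hr₀
  have hpi := Real.pi_pos
  -- constants
  set m : ℝ := min (Real.sin (π/4)) (Real.sin θ) with hm_def
  have hm : 0 < m := lt_min
    (Real.sin_pos_of_pos_of_lt_pi (by linarith) (by linarith))
    (Real.sin_pos_of_pos_of_lt_pi (by linarith) hθ2)
  set B : ℝ := ∫ α in (1/2:ℝ)..1, μ α with hB_def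
  have hB : 0 < B := aux_B_pos μ hc hnn h1
  set M₀ : ℝ := ∫ α in (0:ℝ)..(1/2:ℝ), μ α with hM_def
  have hM₀ : 0 ≤ M₀ := by
    apply intervalIntegral.integral_nonneg (by norm_num)
    intro x hx; exact hnn x ⟨hx.1, by linarith [hx.2]⟩
  set K : ℝ := -Real.cos θ / Real.sin θ with hK_def
  have hK : 0 < K := div_pos
    (by have := Real.cos_neg_of_pi_div_two_lt_of_lt hθ1 (by linarith); linarith)
    (Real.sin_pos_of_pos_of_lt_pi (by linarith) hθ2)
  set C : ℝ := 1 + M₀ / (m * (r₀ * B)) + K with hC_def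
  have hC : 0 < C := by positivity
  refine ⟨1 / C, by positivity, ?_⟩
  intro r φ hr hφ
  obtain ⟨hφ1, hφ2⟩ := hφ
  have hr0 : 0 < r := lt_of_lt_of_le hr₀0 hr
  have hφ0 : 0 ≤ φ := by linarith
  have hφπ : φ ≤ π := by linarith
  set z : ℂ := (r : ℂ) * Complex.exp ((φ : ℂ) * Complex.I) with hz_def
  have hz0 : z ≠ 0 := mul_ne_zero (by exact_mod_cast hr0.ne') (Complex.exp_ne_zero _)
  -- the real integrands
  set R : ℝ → ℝ := fun α => r ^ α * (μ α * Real.cos (α * φ)) with hR_def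
  set S : ℝ → ℝ := fun α => r ^ α * (μ α * Real.sin (α * φ)) with hS_def
  -- representation of the integrand
  have hrepr : ∀ α : ℝ, z ^ (α : ℂ) * (μ α : ℂ) = ((R α : ℝ) : ℂ) + ((S α : ℝ) : ℂ) * Complex.I := by
    intro α
    have hz_exp : z = Complex.exp ((Real.log r : ℂ) + (φ : ℂ) * Complex.I) := by
      rw [Complex.exp_add]
      congr 1
      rw [← Complex.ofReal_exp, Real.exp_log hr0]
    have hlog : Complex.log z = (Real.log r : ℂ) + (φ : ℂ) * Complex.I := by
      rw [hz_exp, Complex.log_exp] <;> simp <;> linarith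
    rw [Complex.cpow_def_of_ne_zero hz0, hlog]
    have : ((Real.log r : ℂ) + (φ : ℂ) * Complex.I) * (α : ℂ)
        = ((α * Real.log r : ℝ) : ℂ) + ((α * φ : ℝ) : ℂ) * Complex.I := by
      push_cast; ring
    rw [this, Complex.exp_add, ← Complex.ofReal_exp, Complex.exp_mul_I]
    have hrpow : Real.exp (α * Real.log r) = r ^ α := by
      rw [Real.rpow_def_of_pos hr0, mul_comm]
    rw [hrpow, ← Complex.ofReal_cos, ← Complex.ofReal_sin]
    simp only [hR_def, hS_def]
    push_cast
    ring
  -- continuity / integrability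
  have hcont_rpow : Continuous fun α : ℝ => r ^ α := by
    apply continuous_iff_continuousAt.mpr
    intro x; exact Real.continuousAt_const_rpow hr0.ne'
  have hRcont : ContinuousOn R (Set.Icc 0 1) :=
    (hcont_rpow.continuousOn).mul (hc.mul ((Real.continuous_cos.comp
      (continuous_id.mul continuous_const)).continuousOn))
  have hScont : ContinuousOn S (Set.Icc 0 1) :=
    (hcont_rpow.continuousOn).mul (hc.mul ((Real.continuous_sin.comp
      (continuous_id.mul continuous_const)).continuousOn))
  have hsub1 : Set.uIcc (0:ℝ) (1/2) ⊆ Set.Icc 0 1 := by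
    rw [Set.uIcc_of_le (by norm_num)]; intro x hx; exact ⟨hx.1, by linarith [hx.2]⟩
  have hsub2 : Set.uIcc (1/2:ℝ) 1 ⊆ Set.Icc 0 1 := by
    rw [Set.uIcc_of_le (by norm_num)]; intro x hx; exact ⟨by linarith [hx.1], hx.2⟩
  have hsub3 : Set.uIcc (0:ℝ) 1 ⊆ Set.Icc 0 1 := by
    rw [Set.uIcc_of_le (by norm_num)]
  have hRint : IntervalIntegrable R volume 0 1 := (hRcont.mono hsub3).intervalIntegrable
  have hSint : IntervalIntegrable S volume 0 1 := (hScont.mono hsub3).intervalIntegrable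
  have hRint1 : IntervalIntegrable R volume 0 (1/2) := (hRcont.mono hsub1).intervalIntegrable
  have hSint1 : IntervalIntegrable S volume 0 (1/2) := (hScont.mono hsub1).intervalIntegrable
  have hRint2 : IntervalIntegrable R volume (1/2) 1 := (hRcont.mono hsub2).intervalIntegrable
  have hSint2 : IntervalIntegrable S volume (1/2) 1 := (hScont.mono hsub2).intervalIntegrable
  have hμint1 : IntervalIntegrable μ volume 0 (1/2) := (hc.mono hsub1).intervalIntegrable
  have hμint2 : IntervalIntegrable μ volume (1/2) 1 := (hc.mono hsub2).intervalIntegrable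
  -- compute the real and imaginary parts
  have hzw : z * w μ z = ((∫ α in (0:ℝ)..1, R α : ℝ) : ℂ)
      + ((∫ α in (0:ℝ)..1, S α : ℝ) : ℂ) * Complex.I := by
    rw [w, ← intervalIntegral.integral_const_mul]
    have : ∀ α : ℝ, z * (z ^ ((α:ℂ) - 1) * (μ α : ℂ)) = ((R α : ℝ) : ℂ) + ((S α : ℝ) : ℂ) * Complex.I := by
      intro α
      rw [← hrepr α]
      rw [show (α : ℂ) = 1 + ((α:ℂ) - 1) by ring, Complex.cpow_add _ _ hz0, Complex.cpow_one]
      ring_nf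
    rw [intervalIntegral.integral_congr (fun α _ => this α)]
    have hRC : IntervalIntegrable (fun α => ((R α : ℝ) : ℂ)) volume 0 1 :=
      ((Complex.continuous_ofReal.comp_continuousOn (hRcont.mono hsub3))).intervalIntegrable
    have hSC : IntervalIntegrable (fun α => ((S α : ℝ) : ℂ)) volume 0 1 :=
      ((Complex.continuous_ofReal.comp_continuousOn (hScont.mono hsub3))).intervalIntegrable
    rw [intervalIntegral.integral_add hRC (hSC.mul_const Complex.I),
      intervalIntegral.integral_mul_const, intervalIntegral.integral_ofReal,
      intervalIntegral.integral_ofReal]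
  have hre : (z * w μ z).re = ∫ α in (0:ℝ)..1, R α := by rw [hzw]; simp
  have him : (z * w μ z).im = ∫ α in (0:ℝ)..1, S α := by rw [hzw]; simp
  -- rpow bounds
  set s : ℝ := r ^ (1/2 : ℝ) with hs_def
  set s₀ : ℝ := r₀ ^ (1/2 : ℝ) with hs₀_def
  have hs_pos : 0 < s := Real.rpow_pos_of_pos hr0 _
  have hs₀_pos : 0 < s₀ := Real.rpow_pos_of_pos hr₀0 _
  have hs₀_sq : s₀ * s₀ = r₀ := by
    rw [hs₀_def, ← Real.rpow_add hr₀0]; norm_num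
  have hs₀_le_s : s₀ ≤ s := Real.rpow_le_rpow hr₀0.le hr (by norm_num)
  have hF1 : ∀ α ∈ Set.Icc (0:ℝ) (1/2), r ^ α ≤ s / s₀ := by
    intro α hα
    rcases le_or_gt 1 r with h | h
    · have hs₀1 : s₀ ≤ 1 := Real.rpow_le_one hr₀0.le hr₀1.le (by norm_num)
      have h2 : r ^ α ≤ s := Real.rpow_le_rpow_of_exponent_le h hα.2
      rw [le_div_iff₀ hs₀_pos]
      nlinarith
    · have h1' : r ^ α ≤ 1 := Real.rpow_le_one hr0.le h.le hα.1
      have : s₀ ≤ s := hs₀_le_s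
      calc r ^ α ≤ 1 := h1'
        _ ≤ s / s₀ := by rw [le_div_iff₀ hs₀_pos]; linarith
  have hF2 : ∀ α ∈ Set.Icc (1/2:ℝ) 1, s₀ * s ≤ r ^ α := by
    intro α hα
    rcases le_or_gt 1 r with h | h
    · have : s ≤ r ^ α := Real.rpow_le_rpow_of_exponent_le h hα.1
      have hs1 : s₀ ≤ 1 := Real.rpow_le_one hr₀0.le hr₀1.le (by norm_num)
      nlinarith
    · have h1 : r ^ (1:ℝ) ≤ r ^ α := Real.rpow_le_rpow_of_exponent_ge hr0 h.le hα.2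
      rw [Real.rpow_one] at h1
      have hss : s * s = r := by rw [hs_def, ← Real.rpow_add hr0]; norm_num
      nlinarith
  -- pointwise facts about angles
  have hangle : ∀ α ∈ Set.Icc (0:ℝ) 1, 0 ≤ α * φ ∧ α * φ ≤ θ := by
    intro α hα
    constructor
    · exact mul_nonneg hα.1 hφ0
    · calc α * φ ≤ 1 * φ := mul_le_mul_of_nonneg_right hα.2 hφ0
        _ = φ := one_mul φ
        _ ≤ θ := hφ2
  have hangle2 : ∀ α ∈ Set.Icc (1/2:ℝ) 1, π/4 ≤ α * φ ∧ α * φ ≤ θ := by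
    intro α hα
    constructor
    · calc π/4 = (1/2) * (π/2) := by ring
        _ ≤ α * φ := mul_le_mul hα.1 hφ1 (by linarith) (by linarith [hα.1])
    · exact (hangle α ⟨by linarith [hα.1], hα.2⟩).2
  -- nonnegativity of S
  have hS_nonneg : ∀ α ∈ Set.Icc (0:ℝ) 1, 0 ≤ S α := by
    intro α hα
    obtain ⟨h1', h2'⟩ := hangle α hα
    exact mul_nonneg (Real.rpow_pos_of_pos hr0 _).le
      (mul_nonneg (hnn α hα) (Real.sin_nonneg_of_nonneg_of_le_pi h1' (by linarith)))
  have hS1_nonneg : 0 ≤ ∫ α in (0:ℝ)..(1/2:ℝ), S α := by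
    apply intervalIntegral.integral_nonneg (by norm_num)
    intro x hx; exact hS_nonneg x ⟨hx.1, by linarith [hx.2]⟩
  -- lower bound on ∫ S
  have hSsplit : (∫ α in (0:ℝ)..1, S α)
      = (∫ α in (0:ℝ)..(1/2:ℝ), S α) + ∫ α in (1/2:ℝ)..1, S α :=
    (intervalIntegral.integral_add_adjacent_intervals hSint1 hSint2).symm
  have hS2_lb : m * (s₀ * s) * B ≤ ∫ α in (1/2:ℝ)..1, S α := by
    have hmono := intervalIntegral.integral_mono_on (by norm_num : (1/2:ℝ) ≤ 1)
      (hμint2.const_mul (m * (s₀ * s))) hSint2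
      (fun α hα => by
        obtain ⟨ha1, ha2⟩ := hangle2 α hα
        have hsin : m ≤ Real.sin (α * φ) := aux_sin_lower hθ1 hθ2 ha1 ha2
        have hμα : 0 ≤ μ α := hnn α ⟨by linarith [hα.1], hα.2⟩
        have hF := hF2 α hα
        have hrpow_pos : (0:ℝ) < r ^ α := Real.rpow_pos_of_pos hr0 _
        show m * (s₀ * s) * μ α ≤ r ^ α * (μ α * Real.sin (α * φ))
        nlinarith [mul_nonneg (mul_nonneg (sub_nonneg.mpr hsin) (mul_nonneg hs₀_pos.le hs_pos.le)) hμα,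
          mul_nonneg (mul_nonneg (sub_nonneg.mpr hF) (le_trans hm.le hsin)) hμα])
    rw [hB_def]
    rwa [intervalIntegral.integral_const_mul] at hmono
  have hS_lb : m * (s₀ * s) * B ≤ ∫ α in (0:ℝ)..1, S α := by
    rw [hSsplit]; linarith
  have hS_nonneg' : 0 ≤ ∫ α in (0:ℝ)..1, S α := by
    nlinarith [mul_pos (mul_pos hm (mul_pos hs₀_pos hs_pos)) hB]
  -- upper bound on ∫ R
  have hRsplit : (∫ α in (0:ℝ)..1, R α)
      = (∫ α in (0:ℝ)..(1/2:ℝ), R α) + ∫ α in (1/2:ℝ)..1, R α :=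
    (intervalIntegral.integral_add_adjacent_intervals hRint1 hRint2).symm
  have hR1_ub : (∫ α in (0:ℝ)..(1/2:ℝ), R α) ≤ (s / s₀) * M₀ := by
    have hmono := intervalIntegral.integral_mono_on (by norm_num : (0:ℝ) ≤ 1/2)
      hRint1 (hμint1.const_mul (s / s₀))
      (fun α hα => by
        have hα01 : α ∈ Set.Icc (0:ℝ) 1 := ⟨hα.1, by linarith [hα.2]⟩
        have hμα : 0 ≤ μ α := hnn α hα01
        have hcos : Real.cos (α * φ) ≤ 1 := Real.cos_le_one _
        have hF := hF1 α hα
        have hrpow_pos : (0:ℝ) < r ^ α := Real.rpow_pos_of_pos hr0 _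
        show r ^ α * (μ α * Real.cos (α * φ)) ≤ s / s₀ * μ α
        nlinarith [mul_nonneg (mul_nonneg (sub_nonneg.mpr hcos) hrpow_pos.le) hμα,
          mul_nonneg (sub_nonneg.mpr hF) hμα])
    rw [hM_def]
    rwa [intervalIntegral.integral_const_mul] at hmono
  have hR2_ub : (∫ α in (1/2:ℝ)..1, R α) ≤ ∫ α in (1/2:ℝ)..1, S α := by
    apply intervalIntegral.integral_mono_on (by norm_num : (1/2:ℝ) ≤ 1) hRint2 hSint2
    intro α hα
    obtain ⟨ha1, ha2⟩ := hangle2 α hα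
    have hcs : Real.cos (α * φ) ≤ Real.sin (α * φ) := aux_cos_le_sin hθ2 ha1 ha2
    have hμα : 0 ≤ μ α := hnn α ⟨by linarith [hα.1], hα.2⟩
    have hrpow_pos : (0:ℝ) < r ^ α := Real.rpow_pos_of_pos hr0 _
    show r ^ α * (μ α * Real.cos (α * φ)) ≤ r ^ α * (μ α * Real.sin (α * φ))
    nlinarith [mul_nonneg (mul_nonneg (sub_nonneg.mpr hcs) hrpow_pos.le) hμα]
  -- lower bound on ∫ R (i.e. upper bound on -∫ R)
  have hR_lb : -(K * ∫ α in (0:ℝ)..1, S α) ≤ ∫ α in (0:ℝ)..1, R α := by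
    have hmono := intervalIntegral.integral_mono_on (by norm_num : (0:ℝ) ≤ 1)
      ((hSint.const_mul K).neg) hRint
      (fun α hα => by
        obtain ⟨ha1, ha2⟩ := hangle α hα
        have hnc : -Real.cos (α * φ) ≤ K * Real.sin (α * φ) :=
          aux_neg_cos_le hθ1 hθ2 ha1 ha2
        have hμα : 0 ≤ μ α := hnn α hα
        have hrpow_pos : (0:ℝ) < r ^ α := Real.rpow_pos_of_pos hr0 _
        show -(K * (r ^ α * (μ α * Real.sin (α * φ)))) ≤ r ^ α * (μ α * Real.cos (α * φ))
        nlinarith [mul_nonneg (mul_nonneg (by linarith : (0:ℝ) ≤ K * Real.sin (α * φ) + Real.cos (α * φ)) hrpow_pos.le) hμα])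
    calc -(K * ∫ α in (0:ℝ)..1, S α)
        = ∫ α in (0:ℝ)..1, -(K * S α) := by
          rw [intervalIntegral.integral_neg, intervalIntegral.integral_const_mul]
      _ ≤ ∫ α in (0:ℝ)..1, R α := hmono
  -- the key comparison
  have hE4 : (s / s₀) * M₀ ≤ (M₀ / (m * (r₀ * B))) * ∫ α in (0:ℝ)..1, S α := by
    have h1' : (M₀ / (m * (r₀ * B))) * (m * (s₀ * s) * B) = (s / s₀) * M₀ := by
      rw [← hs₀_sq]
      field_simp
    calc (s / s₀) * M₀ = (M₀ / (m * (r₀ * B))) * (m * (s₀ * s) * B) := h1'.symm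
      _ ≤ (M₀ / (m * (r₀ * B))) * ∫ α in (0:ℝ)..1, S α := by
          apply mul_le_mul_of_nonneg_left hS_lb
          positivity
  have hIm_eq : |(z * w μ z).im| = ∫ α in (0:ℝ)..1, S α := by
    rw [him, abs_of_nonneg hS_nonneg']
  rw [hIm_eq, hre]
  rw [div_mul_eq_mul_div, div_le_iff₀ hC]
  have habs : |∫ α in (0:ℝ)..1, R α| ≤ C * ∫ α in (0:ℝ)..1, S α := by
    rw [abs_le]
    constructor
    · have hKS : K * (∫ α in (0:ℝ)..1, S α) ≤ C * ∫ α in (0:ℝ)..1, S α := by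
        apply mul_le_mul_of_nonneg_right _ hS_nonneg'
        rw [hC_def]
        have : 0 ≤ M₀ / (m * (r₀ * B)) := by positivity
        linarith
      linarith [hR_lb]
    · have : (∫ α in (0:ℝ)..1, R α) ≤ (s / s₀) * M₀ + ∫ α in (0:ℝ)..1, S α := by
        rw [hRsplit, hSsplit]
        linarith [hR1_ub, hR2_ub, hS1_nonneg]
      have hCexp : C * (∫ α in (0:ℝ)..1, S α)
          = (∫ α in (0:ℝ)..1, S α) + (M₀ / (m * (r₀ * B))) * (∫ α in (0:ℝ)..1, S α)
            + K * (∫ α in (0:ℝ)..1, S α) := by rw [hC_def]; ring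
      have hKS : 0 ≤ K * (∫ α in (0:ℝ)..1, S α) := mul_nonneg hK.le hS_nonneg'
      rw [hCexp]
      linarith [hE4]
  calc 1 * |∫ α in (0:ℝ)..1, R α| = |∫ α in (0:ℝ)..1, R α| := one_mul _
    _ ≤ C * ∫ α in (0:ℝ)..1, S α := habs
    _ = (∫ α in (0:ℝ)..1, S α) * C := mul_comm _ _
end

section
/- Let μ : [0,1] → ℝ be continuous and nonnegative with μ(0) > 0 and μ(1) > 0, and let θ ∈ (π/2, π). Then there exists a constant c > 0, depending only on θ and μ, such that for every z ∈ Σ_θ one has |z·w(z)| ≥ c · ∫₀¹ |z|^α dα. -/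
open Real MeasureTheory

section Helpers

lemma tail_right {r δ : ℝ} (hr : 1 ≤ r) (hδ : 0 < δ) (hδ1 : δ ≤ 1) :
    δ * ∫ α in (0:ℝ)..1, r ^ α ≤ ∫ α in (1-δ:ℝ)..1, r ^ α := by
  have h0 : (0:ℝ) < r := lt_of_lt_of_le one_pos hr
  have hcont : Continuous fun α : ℝ => r ^ α :=
    continuous_iff_continuousAt.mpr fun x => Real.continuousAt_const_rpow h0.ne'
  have key : (∫ α in (0:ℝ)..1, r ^ (δ * α + (1-δ)))
      = δ⁻¹ • ∫ x in (δ*0+(1-δ))..(δ*1+(1-δ)), r ^ x :=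
    intervalIntegral.integral_comp_mul_add (fun x => r ^ x) hδ.ne' (1-δ)
  have he1 : δ*0+(1-δ) = 1 - δ := by ring
  have he2 : δ*1+(1-δ) = 1 := by ring
  rw [he1, he2] at key
  have hmono : (∫ α in (0:ℝ)..1, r ^ α) ≤ ∫ α in (0:ℝ)..1, r ^ (δ * α + (1-δ)) := by
    apply intervalIntegral.integral_mono_on zero_le_one
      (hcont.intervalIntegrable _ _)
      ((hcont.comp (by continuity)).intervalIntegrable _ _)
    intro x hx
    have hxx : x ≤ δ * x + (1-δ) := by nlinarith [mul_nonneg (sub_nonneg.2 hδ1) (sub_nonneg.2 hx.2)]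
    exact Real.rpow_le_rpow_of_exponent_le hr hxx
  calc δ * ∫ α in (0:ℝ)..1, r ^ α ≤ δ * ∫ α in (0:ℝ)..1, r ^ (δ * α + (1-δ)) :=
        mul_le_mul_of_nonneg_left hmono hδ.le
    _ = ∫ x in (1-δ:ℝ)..1, r ^ x := by
        rw [key, smul_eq_mul, ← mul_assoc, mul_inv_cancel₀ hδ.ne', one_mul]

lemma tail_left {r δ : ℝ} (h0 : 0 < r) (hr : r ≤ 1) (hδ : 0 < δ) (hδ1 : δ ≤ 1) :
    δ * ∫ α in (0:ℝ)..1, r ^ α ≤ ∫ α in (0:ℝ)..δ, r ^ α := by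
  have hcont : Continuous fun α : ℝ => r ^ α :=
    continuous_iff_continuousAt.mpr fun x => Real.continuousAt_const_rpow h0.ne'
  have key : (∫ α in (0:ℝ)..1, r ^ (δ * α))
      = δ⁻¹ • ∫ x in (δ*0)..(δ*1), r ^ x :=
    intervalIntegral.integral_comp_mul_left (fun x => r ^ x) hδ.ne'
  have he1 : δ*0 = (0:ℝ) := by ring
  have he2 : δ*1 = δ := by ring
  rw [he1, he2] at key
  have hmono : (∫ α in (0:ℝ)..1, r ^ α) ≤ ∫ α in (0:ℝ)..1, r ^ (δ * α) := by
    apply intervalIntegral.integral_mono_on zero_le_one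
      (hcont.intervalIntegrable _ _)
      ((hcont.comp (by continuity)).intervalIntegrable _ _)
    intro x hx
    have hxx : δ * x ≤ x := by nlinarith [mul_nonneg (sub_nonneg.2 hδ1) hx.1]
    exact Real.rpow_le_rpow_of_exponent_ge h0 hr hxx
  calc δ * ∫ α in (0:ℝ)..1, r ^ α ≤ δ * ∫ α in (0:ℝ)..1, r ^ (δ * α) :=
        mul_le_mul_of_nonneg_left hmono hδ.le
    _ = ∫ x in (0:ℝ)..δ, r ^ x := by
        rw [key, smul_eq_mul, ← mul_assoc, mul_inv_cancel₀ hδ.ne', one_mul]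

lemma weighted_lb {μ : ℝ → ℝ} (hc : ContinuousOn μ (Set.Icc 0 1))
    (hnn : ∀ α ∈ Set.Icc (0:ℝ) 1, 0 ≤ μ α) {m δ r : ℝ} (hm : 0 ≤ m) (hδ : 0 < δ) (hδ1 : δ ≤ 1)
    (hmu0 : ∀ α ∈ Set.Icc (0:ℝ) δ, m ≤ μ α) (hmu1 : ∀ α ∈ Set.Icc (1-δ:ℝ) 1, m ≤ μ α)
    (hr : 0 < r) (htr : 1 ≤ r → δ * ∫ α in (0:ℝ)..1, r ^ α ≤ ∫ α in (1-δ:ℝ)..1, r ^ α)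
    (htl : r ≤ 1 → δ * ∫ α in (0:ℝ)..1, r ^ α ≤ ∫ α in (0:ℝ)..δ, r ^ α) :
    m * (δ * ∫ α in (0:ℝ)..1, r ^ α) ≤ ∫ α in (0:ℝ)..1, r ^ α * μ α := by
  have hcont : Continuous fun α : ℝ => r ^ α :=
    continuous_iff_continuousAt.mpr fun x => Real.continuousAt_const_rpow hr.ne'
  have hprod : ContinuousOn (fun α : ℝ => r ^ α * μ α) (Set.Icc 0 1) :=
    hcont.continuousOn.mul hc
  have hint : ∀ a b : ℝ, 0 ≤ a → a ≤ b → b ≤ 1 →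
      IntervalIntegrable (fun α : ℝ => r ^ α * μ α) volume a b := by
    intro a b ha hab hb
    apply ContinuousOn.intervalIntegrable
    apply hprod.mono
    rw [Set.uIcc_of_le hab]
    exact Set.Icc_subset_Icc ha hb
  rcases le_total 1 r with hr1 | hr1
  · have hsplit : (∫ α in (0:ℝ)..(1-δ), r ^ α * μ α) + (∫ α in (1-δ:ℝ)..1, r ^ α * μ α)
        = ∫ α in (0:ℝ)..1, r ^ α * μ α :=
      intervalIntegral.integral_add_adjacent_intervals
        (hint 0 (1-δ) le_rfl (by linarith) (by linarith))
        (hint (1-δ) 1 (by linarith) (by linarith) le_rfl)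
    have h1 : 0 ≤ ∫ α in (0:ℝ)..(1-δ), r ^ α * μ α := by
      apply intervalIntegral.integral_nonneg (by linarith)
      intro x hx
      exact mul_nonneg (Real.rpow_nonneg hr.le x) (hnn x ⟨hx.1, by linarith [hx.2]⟩)
    have h2 : (∫ α in (1-δ:ℝ)..1, r ^ α * m) ≤ ∫ α in (1-δ:ℝ)..1, r ^ α * μ α := by
      apply intervalIntegral.integral_mono_on (by linarith)
        ((hcont.mul continuous_const).intervalIntegrable _ _)
        (hint (1-δ) 1 (by linarith) (by linarith) le_rfl)
      intro x hx
      exact mul_le_mul_of_nonneg_left (hmu1 x hx) (Real.rpow_nonneg hr.le x)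
    rw [intervalIntegral.integral_mul_const] at h2
    have h3 := htr hr1
    nlinarith [mul_le_mul_of_nonneg_left h3 hm]
  · have hsplit : (∫ α in (0:ℝ)..δ, r ^ α * μ α) + (∫ α in (δ:ℝ)..1, r ^ α * μ α)
        = ∫ α in (0:ℝ)..1, r ^ α * μ α :=
      intervalIntegral.integral_add_adjacent_intervals
        (hint 0 δ le_rfl (by linarith) (by linarith))
        (hint δ 1 (by linarith) (by linarith) le_rfl)
    have h1 : 0 ≤ ∫ α in (δ:ℝ)..1, r ^ α * μ α := by
      apply intervalIntegral.integral_nonneg (by linarith)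
      intro x hx
      exact mul_nonneg (Real.rpow_nonneg hr.le x) (hnn x ⟨by linarith [hx.1], hx.2⟩)
    have h2 : (∫ α in (0:ℝ)..δ, r ^ α * m) ≤ ∫ α in (0:ℝ)..δ, r ^ α * μ α := by
      apply intervalIntegral.integral_mono_on (by linarith)
        ((hcont.mul continuous_const).intervalIntegrable _ _)
        (hint 0 δ le_rfl (by linarith) (by linarith))
      intro x hx
      exact mul_le_mul_of_nonneg_left (hmu0 x hx) (Real.rpow_nonneg hr.le x)
    rw [intervalIntegral.integral_mul_const] at h2
    have h3 := htl hr1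
    nlinarith [mul_le_mul_of_nonneg_left h3 hm]
end Helpers

theorem stmt_5 (μ : ℝ → ℝ) (hc : ContinuousOn μ (Set.Icc 0 1))
    (hnn : ∀ α ∈ Set.Icc (0:ℝ) 1, 0 ≤ μ α) (h0 : 0 < μ 0) (h1 : 0 < μ 1)
    (θ : ℝ) (hθ : θ ∈ Set.Ioo (π / 2) π) :
    ∃ c > 0, ∀ z : ℂ, z ≠ 0 → |z.arg| < θ →
      c * ∫ α in (0:ℝ)..1, ‖z‖ ^ α ≤ ‖z * w μ z‖ := by
  obtain ⟨hθ1, hθ2⟩ := hθ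
  have hπ := Real.pi_pos
  -- pick δ and m from continuity at the endpoints
  obtain ⟨δ₀, hδ₀pos, H0⟩ := Metric.continuousWithinAt_iff.mp
    (hc 0 ⟨le_refl 0, zero_le_one⟩) (μ 0 / 2) (by positivity)
  obtain ⟨δ₁, hδ₁pos, H1⟩ := Metric.continuousWithinAt_iff.mp
    (hc 1 ⟨zero_le_one, le_refl 1⟩) (μ 1 / 2) (by positivity)
  set δ : ℝ := min (min δ₀ δ₁) 1 / 2 with hδdef
  have hδ : 0 < δ := by positivity
  have hδ1 : δ ≤ 1 := by
    have : min (min δ₀ δ₁) 1 ≤ 1 := min_le_right _ _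
    simp only [hδdef]; linarith
  have hδlt0 : δ < δ₀ := by
    have h := min_le_left (min δ₀ δ₁) 1
    have h' := min_le_left δ₀ δ₁
    simp only [hδdef]; linarith
  have hδlt1 : δ < δ₁ := by
    have h := min_le_left (min δ₀ δ₁) 1
    have h' := min_le_right δ₀ δ₁
    simp only [hδdef]; linarith
  set m : ℝ := min (μ 0) (μ 1) / 2 with hmdef
  have hm : 0 < m := by
    have := lt_min h0 h1
    simp only [hmdef]; positivity
  have hmu0 : ∀ α ∈ Set.Icc (0:ℝ) δ, m ≤ μ α := by
    intro α hα
    have hmem : α ∈ Set.Icc (0:ℝ) 1 := ⟨hα.1, le_trans hα.2 hδ1⟩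
    have hd : dist α 0 < δ₀ := by
      rw [Real.dist_eq, sub_zero, abs_of_nonneg hα.1]; linarith [hα.2]
    have := H0 hmem hd
    rw [Real.dist_eq, abs_lt] at this
    have hle : m ≤ μ 0 / 2 := by
      have := min_le_left (μ 0) (μ 1); simp only [hmdef]; linarith
    linarith [this.1]
  have hmu1 : ∀ α ∈ Set.Icc (1-δ:ℝ) 1, m ≤ μ α := by
    intro α hα
    have hmem : α ∈ Set.Icc (0:ℝ) 1 := ⟨by linarith [hα.1], hα.2⟩
    have hd : dist α 1 < δ₁ := by
      rw [Real.dist_eq, abs_sub_comm, abs_of_nonneg (by linarith [hα.2])]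
      linarith [hα.1]
    have := H1 hmem hd
    rw [Real.dist_eq, abs_lt] at this
    have hle : m ≤ μ 1 / 2 := by
      have := min_le_right (μ 0) (μ 1); simp only [hmdef]; linarith
    linarith [this.1]
  -- the key weighted integral lower bound
  have hG : ∀ r : ℝ, 0 < r →
      m * (δ * ∫ α in (0:ℝ)..1, r ^ α) ≤ ∫ α in (0:ℝ)..1, r ^ α * μ α := by
    intro r hr
    exact weighted_lb hc hnn hm.le hδ hδ1 hmu0 hmu1 hr
      (fun h => tail_right h hδ hδ1) (fun h => tail_left hr h hδ hδ1)
  clear H0 H1 hδlt0 hδlt1 hδ₀pos hδ₁pos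
  have hcospos : 0 < Real.cos (θ/2) :=
    Real.cos_pos_of_mem_Ioo ⟨by linarith, by linarith⟩
  refine ⟨Real.cos (θ/2) * m * δ, by positivity, ?_⟩
  intro z hz harg
  haveI : NeZero z := ⟨hz⟩
  set r := ‖z‖ with hrdef
  set φ := z.arg with hφdef
  have hr : 0 < r := norm_pos_iff.mpr hz
  set u : ℂ := Complex.exp ((-(φ/2) : ℝ) * Complex.I) with hudef
  have hrcont : Continuous fun α : ℝ => r ^ α :=
    continuous_iff_continuousAt.mpr fun x => Real.continuousAt_const_rpow hr.ne'
  have hzc : Continuous fun α : ℝ => z ^ (α:ℂ) :=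
    (continuous_const_cpow z).comp Complex.continuous_ofReal
  have hzc' : Continuous fun α : ℝ => z ^ ((α:ℂ) - 1) :=
    (continuous_const_cpow z).comp (Complex.continuous_ofReal.sub continuous_const)
  have hμC : ContinuousOn (fun α : ℝ => (μ α : ℂ)) (Set.Icc 0 1) :=
    Complex.continuous_ofReal.comp_continuousOn hc
  have hIcc : Set.uIcc (0:ℝ) 1 = Set.Icc 0 1 := Set.uIcc_of_le zero_le_one
  have hiW : IntervalIntegrable (fun α : ℝ => z ^ ((α:ℂ)-1) * (μ α : ℂ)) volume 0 1 := by
    apply ContinuousOn.intervalIntegrable; rw [hIcc]; exact hzc'.continuousOn.mul hμC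
  have hFcont : ContinuousOn (fun α : ℝ => u * (z ^ (α:ℂ) * (μ α : ℂ))) (Set.Icc 0 1) :=
    continuousOn_const.mul (hzc.continuousOn.mul hμC)
  have hiF : IntervalIntegrable (fun α : ℝ => u * (z ^ (α:ℂ) * (μ α : ℂ))) volume 0 1 := by
    apply ContinuousOn.intervalIntegrable; rw [hIcc]; exact hFcont
  -- step B
  have hzw : z * w μ z = ∫ α in (0:ℝ)..1, z ^ (α:ℂ) * (μ α : ℂ) := by
    rw [w, ← intervalIntegral.integral_const_mul]
    apply intervalIntegral.integral_congr
    intro α _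
    show z * (z ^ ((α:ℂ) - 1) * (μ α : ℂ)) = z ^ (α:ℂ) * (μ α : ℂ)
    have hα : z ^ (α:ℂ) = z * z ^ ((α:ℂ) - 1) := by
      conv_lhs => rw [show (α:ℂ) = 1 + ((α:ℂ) - 1) by ring]
      rw [Complex.cpow_add _ _ hz, Complex.cpow_one]
    rw [hα, mul_assoc]
  -- real part identity
  have hpoint : ∀ α : ℝ, (u * (z ^ (α:ℂ) * (μ α : ℂ))).re
      = r ^ α * Real.cos (-(φ/2) + φ * α) * μ α := by
    intro α
    rw [Complex.cpow_def_of_ne_zero hz, ← mul_assoc, ← Complex.exp_add]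
    have hre : ((-(φ/2) : ℝ) * Complex.I + Complex.log z * (α:ℂ)).re = Real.log r * α := by
      simp [Complex.add_re, Complex.mul_re, Complex.log_re]; left; rfl
    have him : ((-(φ/2) : ℝ) * Complex.I + Complex.log z * (α:ℂ)).im = -(φ/2) + φ * α := by
      simp [Complex.add_im, Complex.mul_im, Complex.log_im]; left; rfl
    rw [Complex.mul_re]
    simp only [Complex.ofReal_re, Complex.ofReal_im, mul_zero, sub_zero]
    rw [Complex.exp_re, hre, him, ← Real.rpow_def_of_pos hr]
  -- cos lower bound
  have hcosle : ∀ α ∈ Set.Icc (0:ℝ) 1, Real.cos (θ/2) ≤ Real.cos (-(φ/2) + φ * α) := by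
    intro α hα
    have habs : |(-(φ/2) + φ * α)| ≤ θ/2 := by
      have h1 : |(-(φ/2) + φ * α)| = |φ| * |α - 1/2| := by
        rw [← abs_mul]; ring_nf
      have h2 : |α - 1/2| ≤ 1/2 := by
        rw [abs_le]; constructor <;> [linarith [hα.1]; linarith [hα.2]]
      calc |(-(φ/2) + φ * α)| = |φ| * |α - 1/2| := h1
        _ ≤ θ * (1/2) := mul_le_mul harg.le h2 (abs_nonneg _) (by linarith)
        _ = θ/2 := by ring
    calc Real.cos (θ/2) ≤ Real.cos |(-(φ/2) + φ * α)| :=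
          Real.cos_le_cos_of_nonneg_of_le_pi (abs_nonneg _) (by linarith) habs
      _ = Real.cos (-(φ/2) + φ * α) := Real.cos_abs _
  -- |zw| ≥ re of rotated integral
  have hu1 : ‖u‖ = 1 := Complex.norm_exp_ofReal_mul_I _
  have hre_int : (u * (z * w μ z)).re
      = ∫ α in (0:ℝ)..1, (u * (z ^ (α:ℂ) * (μ α : ℂ))).re := by
    rw [hzw, ← intervalIntegral.integral_const_mul]
    exact (ContinuousLinearMap.intervalIntegral_comp_comm Complex.reCLM hiF).symm
  have hstep1 : (u * (z * w μ z)).re ≤ ‖z * w μ z‖ := by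
    calc (u * (z * w μ z)).re ≤ ‖u * (z * w μ z)‖ := Complex.re_le_norm _
      _ = ‖z * w μ z‖ := by rw [norm_mul, hu1, one_mul]
  -- pointwise integrand bound
  have hstep2 : (∫ α in (0:ℝ)..1, Real.cos (θ/2) * (r ^ α * μ α))
      ≤ ∫ α in (0:ℝ)..1, (u * (z ^ (α:ℂ) * (μ α : ℂ))).re := by
    apply intervalIntegral.integral_mono_on zero_le_one
    · apply ContinuousOn.intervalIntegrable; rw [hIcc]
      exact continuousOn_const.mul (hrcont.continuousOn.mul hc)
    · apply ContinuousOn.intervalIntegrable; rw [hIcc]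
      exact Complex.continuous_re.comp_continuousOn hFcont
    · intro α hα
      rw [hpoint α]
      have h1 := hcosle α hα
      have h2 : 0 ≤ r ^ α * μ α := mul_nonneg (Real.rpow_nonneg hr.le α) (hnn α hα)
      nlinarith [mul_le_mul_of_nonneg_right h1 h2]
  rw [intervalIntegral.integral_const_mul] at hstep2
  have hGr := hG r hr
  calc Real.cos (θ/2) * m * δ * ∫ α in (0:ℝ)..1, r ^ α
      = Real.cos (θ/2) * (m * (δ * ∫ α in (0:ℝ)..1, r ^ α)) := by ring
    _ ≤ Real.cos (θ/2) * ∫ α in (0:ℝ)..1, r ^ α * μ α :=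
        mul_le_mul_of_nonneg_left hGr hcospos.le
    _ ≤ ∫ α in (0:ℝ)..1, (u * (z ^ (α:ℂ) * (μ α : ℂ))).re := hstep2
    _ = (u * (z * w μ z)).re := hre_int.symm
    _ ≤ ‖z * w μ z‖ := hstep1
end

section
/- Let μ : [0,1] → ℝ be continuous and nonnegative with μ(0) > 0 and μ(1) > 0, and let θ ∈ (π/2, π). Then there exists a constant c > 0, depending only on θ and μ, such that for every z ∈ Σ_θ one has c · |z| · w(|z|) ≤ |z·w(z)| ≤ |z| · w(|z|), where w(|z|) = ∫₀¹ |z|^(α−1) μ(α) dα is a positive real number. -/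
open Real MeasureTheory

theorem stmt_6 (μ : ℝ → ℝ) (hc : ContinuousOn μ (Set.Icc 0 1))
    (hnn : ∀ α ∈ Set.Icc (0:ℝ) 1, 0 ≤ μ α) (h0 : 0 < μ 0) (h1 : 0 < μ 1)
    (θ : ℝ) (hθ : θ ∈ Set.Ioo (π / 2) π) :
    ∃ c > 0, ∀ z : ℂ, z ≠ 0 → |z.arg| < θ →
      (0 < ∫ α in (0:ℝ)..1, ‖z‖ ^ (α - 1) * μ α) ∧
      c * (‖z‖ * ∫ α in (0:ℝ)..1, ‖z‖ ^ (α - 1) * μ α) ≤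
        ‖z * w μ z‖ ∧
      ‖z * w μ z‖ ≤
        ‖z‖ * ∫ α in (0:ℝ)..1, ‖z‖ ^ (α - 1) * μ α := by
  obtain ⟨hθ1, hθ2⟩ := hθ
  have hπ : 0 < π := Real.pi_pos
  have hθpos : 0 < θ := by linarith
  have hcpos : 0 < Real.cos (θ / 2) :=
    Real.cos_pos_of_mem_Ioo ⟨by linarith, by linarith⟩
  refine ⟨Real.cos (θ / 2), hcpos, ?_⟩
  intro z hz harg
  set r : ℝ := ‖z‖ with hr_def
  have hr : 0 < r := norm_pos_iff.mpr hz
  set φ : ℝ := z.arg with hφ_def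
  -- the real integrand
  set g : ℝ → ℝ := fun α => r ^ (α - 1) * μ α with hg_def
  have hrc : Continuous fun α : ℝ => r ^ (α - 1) := by
    have : (fun α : ℝ => r ^ (α - 1)) = fun α => Real.exp (Real.log r * (α - 1)) := by
      funext α; rw [Real.rpow_def_of_pos hr]
    rw [this]
    exact Real.continuous_exp.comp (continuous_const.mul (continuous_id.sub continuous_const))
  have hgc : ContinuousOn g (Set.Icc 0 1) := hrc.continuousOn.mul hc
  have hgi : ∀ a b : ℝ, Set.Icc a b ⊆ Set.Icc 0 1 → a ≤ b →
      IntervalIntegrable g volume a b := by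
    intro a b hsub hab
    exact ((hgc.mono hsub).intervalIntegrable_of_Icc hab)
  have hgnn : ∀ α ∈ Set.Icc (0:ℝ) 1, 0 ≤ g α := fun α hα =>
    mul_nonneg (Real.rpow_nonneg hr.le _) (hnn α hα)
  -- positivity of ∫ g
  have hpos : 0 < ∫ α in (0:ℝ)..1, g α := by
    have hc0 : ContinuousWithinAt μ (Set.Icc 0 1) 0 :=
      hc 0 ⟨le_refl 0, zero_le_one⟩
    have hev : ∀ᶠ α in nhdsWithin 0 (Set.Icc (0:ℝ) 1), μ 0 / 2 < μ α :=
      hc0.eventually_const_lt (half_lt_self h0)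
    rw [Filter.eventually_iff, Metric.mem_nhdsWithin_iff] at hev
    obtain ⟨ε, hε, hball⟩ := hev
    set δ : ℝ := min (ε / 2) 1 with hδ_def
    have hδpos : 0 < δ := lt_min (by linarith) one_pos
    have hδ1 : δ ≤ 1 := min_le_right _ _
    have hpos1 : 0 < ∫ α in (0:ℝ)..δ, g α := by
      apply intervalIntegral.intervalIntegral_pos_of_pos_on
        (hgi 0 δ (Set.Icc_subset_Icc le_rfl hδ1) hδpos.le)
      · intro x hx
        have hx1 : x ∈ Set.Icc (0:ℝ) 1 := ⟨hx.1.le, hx.2.le.trans hδ1⟩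
        have hxball : x ∈ Metric.ball (0:ℝ) ε ∩ Set.Icc 0 1 := by
          constructor
          · simp only [Metric.mem_ball, Real.dist_eq, sub_zero]
            rw [abs_of_pos hx.1]
            calc x < δ := hx.2
              _ ≤ ε / 2 := min_le_left _ _
              _ < ε := by linarith
          · exact hx1
        have hμx : 0 < μ x := lt_of_le_of_lt (by positivity) (hball hxball)
        exact mul_pos (Real.rpow_pos_of_pos hr _) hμx
      · exact hδpos
    have hpos2 : 0 ≤ ∫ α in δ..1, g α := by
      apply intervalIntegral.integral_nonneg hδ1
      intro u hu
      exact hgnn u ⟨hδpos.le.trans hu.1, hu.2⟩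
    have hadd := intervalIntegral.integral_add_adjacent_intervals
      (hgi 0 δ (Set.Icc_subset_Icc le_rfl hδ1) hδpos.le)
      (hgi δ 1 (Set.Icc_subset_Icc hδpos.le le_rfl) hδ1)
    rw [← hadd]
    linarith
  -- the complex integrand
  set F : ℝ → ℂ := fun α => z ^ ((α : ℂ) - 1) * (μ α : ℂ) with hF_def
  have hFeq : ∀ α : ℝ, F α = Complex.exp (Complex.log z * ((α : ℂ) - 1)) * (μ α : ℂ) := by
    intro α
    show z ^ ((α : ℂ) - 1) * (μ α : ℂ) = _
    rw [Complex.cpow_def_of_ne_zero hz]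
  have hFc : ContinuousOn F (Set.Icc 0 1) := by
    have : F = fun α : ℝ => Complex.exp (Complex.log z * ((α : ℂ) - 1)) * (μ α : ℂ) :=
      funext hFeq
    rw [this]
    exact (Complex.continuous_exp.comp
      (continuous_const.mul (Complex.continuous_ofReal.sub continuous_const))).continuousOn.mul
      (Complex.continuous_ofReal.comp_continuousOn hc)
  have hFi : IntervalIntegrable F volume 0 1 :=
    hFc.intervalIntegrable_of_Icc zero_le_one
  -- |F α| = g α on [0,1]
  have hFabs : ∀ α ∈ Set.Icc (0:ℝ) 1, ‖F α‖ = g α := by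
    intro α hα
    rw [hF_def]
    simp only [norm_mul, Complex.norm_real, Real.norm_eq_abs]
    rw [Complex.norm_cpow_of_ne_zero hz]
    simp only [Complex.sub_re, Complex.ofReal_re, Complex.one_re, Complex.sub_im,
      Complex.ofReal_im, Complex.one_im, sub_zero, Real.exp_zero, mul_zero, div_one]
    rw [abs_of_nonneg (hnn α hα)]
  -- upper bound on |w z|
  have hupper : ‖w μ z‖ ≤ ∫ α in (0:ℝ)..1, g α := by
    have h1' : ‖w μ z‖ = ‖∫ α in (0:ℝ)..1, F α‖ := rfl
    rw [h1']
    calc ‖∫ α in (0:ℝ)..1, F α‖ ≤ ∫ α in (0:ℝ)..1, ‖F α‖ :=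
          intervalIntegral.norm_integral_le_integral_norm zero_le_one
      _ = ∫ α in (0:ℝ)..1, g α := by
          apply intervalIntegral.integral_congr
          intro α hα
          rw [Set.uIcc_of_le zero_le_one] at hα
          exact hFabs α hα
  -- lower bound on |w z|
  set e : ℂ := Complex.exp ((φ / 2 : ℝ) * Complex.I) with he_def
  have hlower : Real.cos (θ / 2) * ∫ α in (0:ℝ)..1, g α ≤ ‖w μ z‖ := by
    have hre : ∀ α ∈ Set.Icc (0:ℝ) 1,
        Real.cos (θ / 2) * g α ≤ (e * F α).re := by
      intro α hα
      have hE : ((φ / 2 : ℝ) : ℂ) * Complex.I + Complex.log z * ((α : ℂ) - 1) =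
          (((α - 1) * Real.log r : ℝ) : ℂ) + (((α - 1 / 2) * φ : ℝ) : ℂ) * Complex.I := by
        apply Complex.ext
        · simp [Complex.add_re, Complex.mul_re, Complex.log_re, Complex.log_im,
            Complex.sub_re, Complex.sub_im]
          rw [hr_def]
          ring
        · simp [Complex.add_im, Complex.mul_im, Complex.log_re, Complex.log_im,
            Complex.sub_re, Complex.sub_im]
          ring
      have hre1 : (e * F α).re = r ^ (α - 1) * Real.cos ((α - 1 / 2) * φ) * μ α := by
        rw [hFeq α, he_def, ← mul_assoc, ← Complex.exp_add, hE]
        rw [Complex.mul_re]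
        simp only [Complex.ofReal_re, Complex.ofReal_im, mul_zero, sub_zero]
        rw [Complex.exp_re]
        simp only [Complex.add_re, Complex.add_im, Complex.ofReal_re, Complex.ofReal_im,
          Complex.mul_re, Complex.mul_im, Complex.I_re, Complex.I_im, mul_zero, mul_one,
          zero_mul, sub_zero, zero_add, add_zero]
        rw [mul_comm (α - 1) (Real.log r), ← Real.rpow_def_of_pos hr]
      rw [hre1]
      have hcos : Real.cos (θ / 2) ≤ Real.cos ((α - 1 / 2) * φ) := by
        rw [← Real.cos_abs ((α - 1 / 2) * φ)]
        apply Real.cos_le_cos_of_nonneg_of_le_pi (abs_nonneg _) (by linarith)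
        rw [abs_mul]
        have h1' : |α - 1 / 2| ≤ 1 / 2 := by
          rw [abs_le]; constructor <;> [linarith [hα.1]; linarith [hα.2]]
        have h2' : |φ| ≤ θ := harg.le
        calc |α - 1 / 2| * |φ| ≤ (1 / 2) * θ :=
              mul_le_mul h1' h2' (abs_nonneg _) (by norm_num)
          _ = θ / 2 := by ring
      have hgα : 0 ≤ g α := hgnn α hα
      calc Real.cos (θ / 2) * g α ≤ Real.cos ((α - 1 / 2) * φ) * g α :=
            mul_le_mul_of_nonneg_right hcos hgα
        _ = r ^ (α - 1) * Real.cos ((α - 1 / 2) * φ) * μ α := by rw [hg_def]; ring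
    have heFi : IntervalIntegrable (fun α => e * F α) volume 0 1 := by
      apply IntervalIntegrable.const_mul hFi
    have hreInt : (∫ α in (0:ℝ)..1, (e * F α).re) = (e * w μ z).re := by
      have := Complex.reCLM.intervalIntegral_comp_comm heFi
      simp only [Complex.reCLM_apply] at this
      rw [this, intervalIntegral.integral_const_mul]
      rfl
    have hmono : (∫ α in (0:ℝ)..1, Real.cos (θ / 2) * g α) ≤
        ∫ α in (0:ℝ)..1, (e * F α).re := by
      apply intervalIntegral.integral_mono_on zero_le_one
        ((hgi 0 1 le_rfl zero_le_one).const_mul _)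
      · exact ((Complex.continuous_re.comp_continuousOn
          ((continuous_const.continuousOn (s := Set.Icc (0:ℝ) 1)).mul hFc))).intervalIntegrable_of_Icc zero_le_one
      · exact hre
    have habs_e : ‖e * w μ z‖ = ‖w μ z‖ := by
      rw [norm_mul, he_def, Complex.norm_exp_ofReal_mul_I, one_mul]
    calc Real.cos (θ / 2) * ∫ α in (0:ℝ)..1, g α
        = ∫ α in (0:ℝ)..1, Real.cos (θ / 2) * g α := by
          rw [intervalIntegral.integral_const_mul]
      _ ≤ ∫ α in (0:ℝ)..1, (e * F α).re := hmono
      _ = (e * w μ z).re := hreInt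
      _ ≤ ‖e * w μ z‖ := Complex.re_le_norm _
      _ = ‖w μ z‖ := habs_e
  refine ⟨hpos, ?_, ?_⟩
  · rw [norm_mul]
    calc Real.cos (θ / 2) * (r * ∫ α in (0:ℝ)..1, g α)
        = r * (Real.cos (θ / 2) * ∫ α in (0:ℝ)..1, g α) := by ring
      _ ≤ r * ‖w μ z‖ := mul_le_mul_of_nonneg_left hlower hr.le
  · rw [norm_mul]
    exact mul_le_mul_of_nonneg_left hupper hr.le
end

section
/- Let μ : [0,1] → ℝ be continuous and nonnegative with μ(0) > 0 and μ(1) > 0. Then there exists a constant c > 0 such that for every real r > 0, one has c · ∫₀¹ r^α dα ≤ ∫₀¹ r^α μ(α) dα ≤ ‖μ‖_{C[0,1]} · ∫₀¹ r^α dα. -/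
open Real MeasureTheory

lemma int_rpow {r : ℝ} (hr : 0 < r) (hr1 : r ≠ 1) (a b : ℝ) :
    ∫ α in a..b, r ^ α = (r ^ b - r ^ a) / Real.log r := by
  have hlog : Real.log r ≠ 0 := Real.log_ne_zero_of_pos_of_ne_one hr hr1
  have key : ∀ x ∈ Set.uIcc a b, HasDerivAt (fun y => r ^ y / Real.log r) (r ^ x) x := by
    intro x _
    have := ((Real.hasStrictDerivAt_const_rpow hr x).hasDerivAt).div_const (Real.log r)
    simpa [mul_div_assoc, div_self hlog] using this
  have hcont : IntervalIntegrable (fun y => r ^ y) volume a b :=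
    (continuous_const.rpow continuous_id fun _ => Or.inl hr.ne').intervalIntegrable a b
  rw [intervalIntegral.integral_eq_sub_of_hasDerivAt key hcont]
  ring

-- Bernoulli: r^δ ≤ 1 + δ*(r-1) for r ≥ 0, 0 ≤ δ ≤ 1
lemma bern {r δ : ℝ} (hr : 0 ≤ r) (h0 : 0 ≤ δ) (h1 : δ ≤ 1) :
    r ^ δ ≤ 1 + δ * (r - 1) := by
  have := rpow_one_add_le_one_add_mul_self (s := r - 1) (by linarith) h0 h1
  simpa using this

lemma low_le {r δ : ℝ} (hr : 0 < r) (hr1 : r ≤ 1) (h0 : 0 < δ) (h1 : δ ≤ 1) :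
    δ * ∫ α in (0:ℝ)..1, r ^ α ≤ ∫ α in (0:ℝ)..δ, r ^ α := by
  rcases eq_or_lt_of_le hr1 with rfl | hlt
  · simp [Real.one_rpow]
  · have hlog : Real.log r < 0 := Real.log_neg hr hlt
    rw [int_rpow hr hlt.ne 0 1, int_rpow hr hlt.ne 0 δ]
    rw [Real.rpow_zero, Real.rpow_one]
    rw [← mul_div_assoc, div_le_div_right_of_neg hlog]
    have := bern hr.le h0.le h1
    nlinarith

lemma high_le {r δ : ℝ} (hr : 1 ≤ r) (h0 : 0 < δ) (h1 : δ ≤ 1) :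
    δ * ∫ α in (0:ℝ)..1, r ^ α ≤ ∫ α in (1-δ:ℝ)..1, r ^ α := by
  rcases eq_or_lt_of_le hr with rfl | hlt
  · simp [Real.one_rpow]
  · have hr0 : (0:ℝ) < r := lt_trans one_pos hlt
    have hlog : 0 < Real.log r := Real.log_pos hlt
    rw [int_rpow hr0 hlt.ne' 0 1, int_rpow hr0 hlt.ne' (1-δ) 1]
    rw [Real.rpow_zero, Real.rpow_one]
    rw [← mul_div_assoc, div_le_div_iff_of_pos_right hlog]
    -- need : δ * (r - 1) ≤ r - r^(1-δ)
    have hb := bern (r := r⁻¹) (by positivity) h0.le h1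
    have hinv : r⁻¹ ^ δ = (r ^ δ)⁻¹ := Real.inv_rpow hr0.le δ
    have hsplit : r ^ (1 - δ : ℝ) = r * (r ^ δ)⁻¹ := by
      rw [Real.rpow_sub hr0, Real.rpow_one]; rfl
    rw [hinv] at hb
    have hpow : 0 < r ^ δ := Real.rpow_pos_of_pos hr0 δ
    rw [hsplit]
    have h2 : r * (r ^ δ)⁻¹ ≤ r * (1 + δ * (r⁻¹ - 1)) :=
      mul_le_mul_of_nonneg_left hb hr0.le
    have h3 : r * (1 + δ * (r⁻¹ - 1)) = r + δ * (1 - r) := by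
      field_simp
    linarith [h3 ▸ h2]

theorem stmt_7 (μ : ℝ → ℝ) (hc : ContinuousOn μ (Set.Icc 0 1))
    (hnn : ∀ α ∈ Set.Icc (0:ℝ) 1, 0 ≤ μ α) (h0 : 0 < μ 0) (h1 : 0 < μ 1) :
    ∃ c > 0, ∀ r : ℝ, 0 < r →
      c * ∫ α in (0:ℝ)..1, r ^ α ≤ (∫ α in (0:ℝ)..1, r ^ α * μ α) ∧
      (∫ α in (0:ℝ)..1, r ^ α * μ α) ≤ sSup (μ '' Set.Icc 0 1) * ∫ α in (0:ℝ)..1, r ^ α := by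
  -- find δ, ε
  have hmem0 : (0:ℝ) ∈ Set.Icc (0:ℝ) 1 := by constructor <;> norm_num
  have hmem1 : (1:ℝ) ∈ Set.Icc (0:ℝ) 1 := by constructor <;> norm_num
  obtain ⟨d0, hd0, hball0⟩ := Metric.continuousWithinAt_iff.mp (hc 0 hmem0) (μ 0 / 2) (by linarith)
  obtain ⟨d1, hd1, hball1⟩ := Metric.continuousWithinAt_iff.mp (hc 1 hmem1) (μ 1 / 2) (by linarith)
  set δ : ℝ := min (min (d0/2) (d1/2)) (1/2) with hδdef
  have hδpos : 0 < δ := by positivity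
  have hδhalf : δ ≤ 1/2 := min_le_right _ _
  have hδ1 : δ ≤ 1 := by linarith
  set ε : ℝ := min (μ 0 / 2) (μ 1 / 2) with hεdef
  have hεpos : 0 < ε := lt_min (by linarith) (by linarith)
  have hlow : ∀ α ∈ Set.Icc (0:ℝ) δ, ε ≤ μ α := by
    intro α ⟨ha, hb⟩
    have hαI : α ∈ Set.Icc (0:ℝ) 1 := ⟨ha, le_trans hb hδ1⟩
    have hdist : dist α 0 < d0 := by
      rw [Real.dist_eq, sub_zero, abs_of_nonneg ha]
      calc α ≤ δ := hb
        _ ≤ d0/2 := le_trans (min_le_left _ _) (min_le_left _ _)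
        _ < d0 := by linarith
    have := hball0 hαI hdist
    rw [Real.dist_eq] at this
    have := abs_lt.mp this
    calc ε ≤ μ 0 / 2 := min_le_left _ _
      _ ≤ μ α := by linarith [this.1]
  have hhigh : ∀ α ∈ Set.Icc (1-δ:ℝ) 1, ε ≤ μ α := by
    intro α ⟨ha, hb⟩
    have hαI : α ∈ Set.Icc (0:ℝ) 1 := ⟨by linarith, hb⟩
    have hdist : dist α 1 < d1 := by
      rw [Real.dist_eq, abs_of_nonpos (by linarith : α - 1 ≤ 0)]
      have : δ ≤ d1/2 := le_trans (min_le_left _ _) (min_le_right _ _)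
      linarith
    have := hball1 hαI hdist
    rw [Real.dist_eq] at this
    have := abs_lt.mp this
    calc ε ≤ μ 1 / 2 := min_le_right _ _
      _ ≤ μ α := by linarith [this.1]
  refine ⟨ε * δ, by positivity, fun r hr => ?_⟩
  have hcontr : Continuous (fun α : ℝ => r ^ α) :=
    continuous_const.rpow continuous_id fun _ => Or.inl hr.ne'
  have hrpow_nn : ∀ α : ℝ, 0 ≤ r ^ α := fun α => Real.rpow_nonneg hr.le α
  have hint : ∀ a b : ℝ, 0 ≤ a → a ≤ b → b ≤ 1 →
      IntervalIntegrable (fun α => r ^ α * μ α) volume a b := by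
    intro a b ha hab hb
    apply ContinuousOn.intervalIntegrable
    refine hcontr.continuousOn.mul (hc.mono ?_)
    rw [Set.uIcc_of_le hab]
    exact Set.Icc_subset_Icc ha hb
  have hintr : ∀ a b : ℝ, IntervalIntegrable (fun α => r ^ α) volume a b :=
    fun a b => hcontr.intervalIntegrable a b
  constructor
  · -- lower bound
    have key : ε * δ * ∫ α in (0:ℝ)..1, r ^ α ≤
        ∫ α in (0:ℝ)..1, r ^ α * μ α := by
      rcases le_total r 1 with hrle | hrge
      · -- use piece [0, δ]
        have s1 : ε * δ * ∫ α in (0:ℝ)..1, r ^ α ≤ ε * ∫ α in (0:ℝ)..δ, r ^ α := by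
          have := mul_le_mul_of_nonneg_left (low_le hr hrle hδpos hδ1) hεpos.le
          linarith [this]
        have s2 : ε * ∫ α in (0:ℝ)..δ, r ^ α ≤ ∫ α in (0:ℝ)..δ, r ^ α * μ α := by
          rw [← intervalIntegral.integral_const_mul]
          apply intervalIntegral.integral_mono_on hδpos.le
            ((continuous_const.mul hcontr).intervalIntegrable 0 δ)
            (hint 0 δ le_rfl hδpos.le hδ1)
          intro α hα
          have := hlow α hα
          have := hrpow_nn α
          simp only [Pi.mul_apply, ← hεdef]
          nlinarith
        have s3 : ∫ α in (0:ℝ)..δ, r ^ α * μ α ≤ ∫ α in (0:ℝ)..1, r ^ α * μ α := by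
          rw [← intervalIntegral.integral_add_adjacent_intervals
            (hint 0 δ le_rfl hδpos.le hδ1) (hint δ 1 hδpos.le hδ1 le_rfl)]
          have : 0 ≤ ∫ α in δ..(1:ℝ), r ^ α * μ α := by
            apply intervalIntegral.integral_nonneg hδ1
            intro u hu
            exact mul_nonneg (hrpow_nn u) (hnn u ⟨le_trans hδpos.le hu.1, hu.2⟩)
          linarith
        linarith
      · -- use piece [1-δ, 1]
        have h1δ : (0:ℝ) ≤ 1 - δ := by linarith
        have h1δ' : (1-δ:ℝ) ≤ 1 := by linarith
        have s1 : ε * δ * ∫ α in (0:ℝ)..1, r ^ α ≤ ε * ∫ α in (1-δ:ℝ)..1, r ^ α := by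
          have := mul_le_mul_of_nonneg_left (high_le hrge hδpos hδ1) hεpos.le
          linarith [this]
        have s2 : ε * ∫ α in (1-δ:ℝ)..1, r ^ α ≤ ∫ α in (1-δ:ℝ)..1, r ^ α * μ α := by
          rw [← intervalIntegral.integral_const_mul]
          apply intervalIntegral.integral_mono_on h1δ'
            ((continuous_const.mul hcontr).intervalIntegrable _ _)
            (hint (1-δ) 1 h1δ h1δ' le_rfl)
          intro α hα
          have := hhigh α hα
          have := hrpow_nn α
          simp only [Pi.mul_apply, ← hεdef]
          nlinarith
        have s3 : ∫ α in (1-δ:ℝ)..1, r ^ α * μ α ≤ ∫ α in (0:ℝ)..1, r ^ α * μ α := by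
          rw [← intervalIntegral.integral_add_adjacent_intervals
            (hint 0 (1-δ) le_rfl h1δ h1δ') (hint (1-δ) 1 h1δ h1δ' le_rfl)]
          have : 0 ≤ ∫ α in (0:ℝ)..(1-δ), r ^ α * μ α := by
            apply intervalIntegral.integral_nonneg h1δ
            intro u hu
            exact mul_nonneg (hrpow_nn u) (hnn u ⟨hu.1, le_trans hu.2 h1δ'⟩)
          linarith
        linarith
    exact key
  · -- upper bound
    have hbdd : BddAbove (μ '' Set.Icc 0 1) :=
      (isCompact_Icc.image_of_continuousOn hc).bddAbove
    have hM : ∀ α ∈ Set.Icc (0:ℝ) 1, μ α ≤ sSup (μ '' Set.Icc 0 1) :=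
      fun α hα => le_csSup hbdd ⟨α, hα, rfl⟩
    calc (∫ α in (0:ℝ)..1, r ^ α * μ α)
        ≤ ∫ α in (0:ℝ)..1, sSup (μ '' Set.Icc 0 1) * r ^ α := by
          apply intervalIntegral.integral_mono_on (by norm_num)
            (hint 0 1 le_rfl zero_le_one le_rfl)
            ((continuous_const.mul hcontr).intervalIntegrable 0 1)
          intro α hα
          have := hM α hα
          have := hrpow_nn α
          simp only [Pi.mul_apply]
          nlinarith
      _ = sSup (μ '' Set.Icc 0 1) * ∫ α in (0:ℝ)..1, r ^ α :=
          intervalIntegral.integral_const_mul _ _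
end

section
/- Let λ > 0 and ψ ∈ (0, π/2), and define z(p) = λ(1 + sin(ip − ψ)) for p ∈ ℂ, so that z'(p) = iλ·cos(ip − ψ). Then for p = ξ + iη with ξ, η ∈ ℝ one has z(p) = λ(1 − sin(ψ+η)·cosh ξ) + iλ·cos(ψ+η)·sinh ξ, and if moreover ψ + η ∈ (0, π/2), then z(p) ≠ 0 and |z'(p)/z(p)|² = (cosh ξ + sin(ψ+η))/(cosh ξ − sin(ψ+η)); consequently |z'(p)/z(p)|² ≤ (1 + sin(ψ+η))/(1 − sin(ψ+η)). -/
open Real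

theorem stmt_11 (lam ψ ξ η : ℝ) (hlam : 0 < lam) (hψ : ψ ∈ Set.Ioo 0 (π / 2))
    (p z z' : ℂ) (hp : p = (ξ : ℂ) + (η : ℂ) * Complex.I)
    (hz : z = (lam : ℂ) * (1 + Complex.sin (Complex.I * p - (ψ : ℂ))))
    (hz' : z' = Complex.I * (lam : ℂ) * Complex.cos (Complex.I * p - (ψ : ℂ))) :
    z = (⟨lam * (1 - Real.sin (ψ + η) * Real.cosh ξ),
          lam * Real.cos (ψ + η) * Real.sinh ξ⟩ : ℂ) ∧
    (ψ + η ∈ Set.Ioo 0 (π / 2) →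
      z ≠ 0 ∧
      ‖z' / z‖ ^ 2 =
        (Real.cosh ξ + Real.sin (ψ + η)) / (Real.cosh ξ - Real.sin (ψ + η)) ∧
      ‖z' / z‖ ^ 2 ≤ (1 + Real.sin (ψ + η)) / (1 - Real.sin (ψ + η))) := by
  set w : ℂ := Complex.I * p - (ψ : ℂ) with hwdef
  have hw : w = (↑(-(ψ + η)) : ℂ) + (ξ : ℂ) * Complex.I := by
    rw [hwdef, hp]; push_cast; ring_nf; rw [Complex.I_sq]; ring
  have hsinw : Complex.sin w =
      (↑(-(Real.sin (ψ + η) * Real.cosh ξ)) : ℂ)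
        + ↑(Real.cos (ψ + η) * Real.sinh ξ) * Complex.I := by
    rw [hw, Complex.sin_add, Complex.sin_mul_I, Complex.cos_mul_I]
    rw [← Complex.ofReal_sin, ← Complex.ofReal_cos, ← Complex.ofReal_sinh,
      ← Complex.ofReal_cosh, Real.sin_neg, Real.cos_neg]
    push_cast
    ring
  have hcosw : Complex.cos w =
      (↑(Real.cos (ψ + η) * Real.cosh ξ) : ℂ)
        + ↑(Real.sin (ψ + η) * Real.sinh ξ) * Complex.I := by
    rw [hw, Complex.cos_add, Complex.sin_mul_I, Complex.cos_mul_I]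
    rw [← Complex.ofReal_sin, ← Complex.ofReal_cos, ← Complex.ofReal_sinh,
      ← Complex.ofReal_cosh, Real.sin_neg, Real.cos_neg]
    push_cast
    ring
  have h1 : z = (⟨lam * (1 - Real.sin (ψ + η) * Real.cosh ξ),
          lam * Real.cos (ψ + η) * Real.sinh ξ⟩ : ℂ) := by
    rw [Complex.mk_eq_add_mul_I, hz, hsinw]
    push_cast
    ring
  refine ⟨h1, fun hmem => ?_⟩
  obtain ⟨hs0, hs1⟩ := hmem
  set s := Real.sin (ψ + η) with hs
  set c := Real.cosh ξ with hc
  have hspos : 0 < s := Real.sin_pos_of_pos_of_lt_pi hs0 (by linarith [Real.pi_gt_three])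
  have hcopos : 0 < Real.cos (ψ + η) :=
    Real.cos_pos_of_mem_Ioo ⟨by linarith [Real.pi_pos], hs1⟩
  have hpyth : Real.cos (ψ + η) ^ 2 = 1 - s ^ 2 := by
    have := Real.sin_sq_add_cos_sq (ψ + η); nlinarith
  have hslt : s < 1 := by nlinarith
  have hc1 : 1 ≤ c := Real.one_le_cosh ξ
  have hsinh : Real.sinh ξ ^ 2 = c ^ 2 - 1 := by
    have := Real.cosh_sq_sub_sinh_sq ξ; nlinarith
  have hzsq : ‖z‖ ^ 2 = lam ^ 2 * (c - s) ^ 2 := by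
    rw [Complex.sq_norm, h1, Complex.normSq_mk]
    linear_combination lam ^ 2 * Real.sinh ξ ^ 2 * hpyth + lam ^ 2 * (1 - s ^ 2) * hsinh
  have hcs : 0 < c - s := by linarith
  have hzne : z ≠ 0 := by
    intro h
    rw [h, norm_zero] at hzsq
    nlinarith [mul_pos (pow_pos hlam 2) (pow_pos hcs 2)]
  have hz'sq : ‖z'‖ ^ 2 = lam ^ 2 * (c ^ 2 - s ^ 2) := by
    rw [hz', hcosw, ← Complex.mk_eq_add_mul_I]
    rw [norm_mul, norm_mul, Complex.norm_I, one_mul, mul_pow, Complex.sq_norm,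
      Complex.sq_norm, Complex.normSq_mk]
    simp only [Complex.ofReal_re, Complex.ofReal_im, Complex.normSq_mk]
    linear_combination lam ^ 2 * c ^ 2 * hpyth + lam ^ 2 * s ^ 2 * hsinh
  have hratio : ‖z' / z‖ ^ 2 = (c + s) / (c - s) := by
    rw [norm_div, div_pow, hzsq, hz'sq]
    rw [div_eq_div_iff (by positivity) (by positivity)]
    ring
  refine ⟨hzne, hratio, ?_⟩
  rw [hratio, div_le_div_iff₀ hcs (by linarith)]
  nlinarith
end

section
/- Let θ ∈ (π/2, π) and τ > 0, and define χ(z) = (1 − e^{−zτ})/τ. Let Γ_τ denote the set of z ∈ ℂ with z ≠ 0, |arg z| ≤ θ, and either |z|·τ ≤ 1, or |arg z| = θ and |z|·τ·sin θ ≤ π. Then there exist constants c, c₁, c₂ > 0 and θ' ∈ (π/2, π), depending only on θ, such that for all z ∈ Γ_τ: (i) |χ(z) − z| ≤ c·|z|²·τ; (ii) c₁·|z| ≤ |χ(z)| ≤ c₂·|z|; (iii) χ(z) ≠ 0 and |arg χ(z)| ≤ θ'. -/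
open Real

lemma sector_bound {A : ℝ} (hA : 0 ≤ A) {u : ℂ} (hu : u ≠ 0)
    (h : -(A * |u.im|) ≤ u.re) : |u.arg| ≤ π / 2 + Real.arctan A := by
  have hat0 : 0 ≤ Real.arctan A := by
    rw [← Real.arctan_zero]; exact Real.arctan_strictMono.monotone hA
  have hat2 : Real.arctan A < π / 2 := Real.arctan_lt_pi_div_two A
  have habs : 0 < ‖u‖ := norm_pos_iff.mpr hu
  have hsq : (0:ℝ) < Real.sqrt (1 + A ^ 2) := Real.sqrt_pos.mpr (by positivity)
  have hcos : Real.cos (π / 2 + Real.arctan A) = -(A / Real.sqrt (1 + A ^ 2)) := by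
    rw [Real.cos_add, Real.cos_pi_div_two, Real.sin_pi_div_two, Real.sin_arctan]
    ring
  have key : Real.cos (π / 2 + Real.arctan A) ≤ Real.cos u.arg := by
    rw [Complex.cos_arg hu, hcos]
    rcases le_or_gt 0 u.re with h0 | h0
    · have h1 : (0:ℝ) ≤ u.re / ‖u‖ := by positivity
      have h2 : (0:ℝ) ≤ A / Real.sqrt (1 + A ^ 2) := by positivity
      linarith
    · rw [neg_le, ← neg_div, div_le_div_iff₀ habs hsq]
      have h1 : Real.sqrt (1 + A ^ 2) ^ 2 = 1 + A ^ 2 := Real.sq_sqrt (by positivity)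
      have h2 : ‖u‖ ^ 2 = u.re ^ 2 + u.im ^ 2 := by
        rw [Complex.sq_norm, Complex.normSq_apply]; ring
      have h3 : u.re ^ 2 ≤ A ^ 2 * u.im ^ 2 := by
        have hre : |u.re| ≤ A * |u.im| := by rw [abs_of_neg h0]; linarith
        calc u.re ^ 2 = |u.re| ^ 2 := (sq_abs _).symm
          _ ≤ (A * |u.im|) ^ 2 := by
              exact pow_le_pow_left₀ (abs_nonneg _) hre 2
          _ = A ^ 2 * u.im ^ 2 := by rw [mul_pow, sq_abs]
      have hsq2 : (-u.re * Real.sqrt (1 + A ^ 2)) ^ 2 ≤ (A * ‖u‖) ^ 2 := by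
        nlinarith
      have := Real.sqrt_le_sqrt hsq2
      rwa [Real.sqrt_sq (by nlinarith : (0:ℝ) ≤ -u.re * Real.sqrt (1 + A ^ 2)), Real.sqrt_sq (by positivity)] at this
  have harg : |u.arg| ≤ π := abs_le.mpr ⟨Complex.neg_pi_lt_arg u |>.le, Complex.arg_le_pi u⟩
  by_contra hcon
  push_neg at hcon
  have h5 : Real.cos |u.arg| < Real.cos (π / 2 + Real.arctan A) := by
    apply Real.strictAntiOn_cos _ _ hcon
    · constructor <;> [positivity; linarith]
    · exact ⟨abs_nonneg _, harg⟩
  rw [Real.cos_abs] at h5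
  linarith

lemma abs_sin_eq_sin_abs {t : ℝ} (h1 : -π ≤ t) (h2 : t ≤ π) :
    |Real.sin t| = Real.sin |t| := by
  rcases le_or_gt 0 t with h | h
  · rw [abs_of_nonneg h, abs_of_nonneg (Real.sin_nonneg_of_nonneg_of_le_pi h h2)]
  · rw [abs_of_neg h, abs_of_nonpos (Real.sin_nonpos_of_nonpos_of_neg_pi_le h.le h1),
      Real.sin_neg]

set_option maxHeartbeats 1000000 in
theorem stmt_13 (θ : ℝ) (hθ : θ ∈ Set.Ioo (π / 2) π) :
    ∃ c > 0, ∃ c₁ > 0, ∃ c₂ > 0, ∃ θ' ∈ Set.Ioo (π / 2) π,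
      ∀ τ : ℝ, 0 < τ → ∀ z : ℂ, z ≠ 0 → |z.arg| ≤ θ →
        (‖z‖ * τ ≤ 1 ∨ (|z.arg| = θ ∧ ‖z‖ * τ * Real.sin θ ≤ π)) →
        ‖(1 - Complex.exp (-z * (τ : ℂ))) / (τ : ℂ) - z‖ ≤
            c * ‖z‖ ^ 2 * τ ∧
        c₁ * ‖z‖ ≤ ‖(1 - Complex.exp (-z * (τ : ℂ))) / (τ : ℂ)‖ ∧
        ‖(1 - Complex.exp (-z * (τ : ℂ))) / (τ : ℂ)‖ ≤ c₂ * ‖z‖ ∧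
        (1 - Complex.exp (-z * (τ : ℂ))) / (τ : ℂ) ≠ 0 ∧
        |((1 - Complex.exp (-z * (τ : ℂ))) / (τ : ℂ)).arg| ≤ θ' := by
  obtain ⟨hθ1, hθ2⟩ := hθ
  have hπ := Real.pi_pos
  have hπ3 := Real.pi_gt_three
  have hθ0 : 0 < θ := by linarith
  have hs : 0 < Real.sin θ := Real.sin_pos_of_pos_of_lt_pi hθ0 hθ2
  have hs1 : Real.sin θ ≤ 1 := Real.sin_le_one θ
  set s := Real.sin θ with hsdef
  set M : ℝ := π / s with hMdef
  have hM0 : 0 < M := by positivity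
  have hMπ : π ≤ M := by rw [hMdef, le_div_iff₀ hs]; nlinarith
  have hM1 : 1 ≤ M := by linarith
  set c : ℝ := Real.exp M + 1 + M with hcdef
  have hc0 : 0 < c := by positivity
  have hc1 : 1 ≤ c := by nlinarith [Real.exp_pos M]
  set c₁ : ℝ := min (1 / M) (Real.exp (-M) / π) with hc₁def
  have hc₁0 : 0 < c₁ := lt_min (by positivity) (by positivity)
  have hc₁M : c₁ ≤ 1 / M := min_le_left _ _
  have hc₁π : c₁ ≤ Real.exp (-M) / π := min_le_right _ _
  set c₂ : ℝ := 1 + c * M with hc₂def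
  set A : ℝ := π / (2 * s) with hAdef
  have hA0 : 0 < A := by positivity
  set θ' : ℝ := π / 2 + Real.arctan A with hθ'def
  refine ⟨c, hc0, c₁, hc₁0, c₂, by rw [hc₂def]; have := mul_pos hc0 hM0; linarith, θ', ⟨?_, ?_⟩, ?_⟩
  · have h1 : 0 < Real.arctan A := by
      rw [← Real.arctan_zero]; exact Real.arctan_strictMono hA0
    rw [hθ'def]; linarith
  · have h2 := Real.arctan_lt_pi_div_two A
    rw [hθ'def]; linarith
  intro τ hτ z hz hargz hreg
  set w := z * (τ : ℂ) with hwdef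
  have hwz : -z * (τ : ℂ) = -w := by rw [hwdef]; ring
  rw [hwz]
  have hτ0 : (τ : ℂ) ≠ 0 := Complex.ofReal_ne_zero.mpr hτ.ne'
  have hw0 : w ≠ 0 := mul_ne_zero hz hτ0
  have hr : ‖w‖ = ‖z‖ * τ := by
    rw [hwdef, norm_mul, Complex.norm_real, Real.norm_eq_abs, abs_of_pos hτ]
  set r := ‖w‖ with hrdef
  have hr0 : 0 < r := norm_pos_iff.mpr hw0
  have hargw : w.arg = z.arg := by
    rw [hwdef, mul_comm]; exact Complex.arg_real_mul z hτ
  have hargwθ : |w.arg| ≤ θ := by rw [hargw]; exact hargz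
  set x := w.re with hxdef
  set y := w.im with hydef
  have hxr : |x| ≤ r := Complex.abs_re_le_norm w
  have hyr : |y| ≤ r := Complex.abs_im_le_norm w
  have hargub : |w.arg| ≤ π :=
    abs_le.mpr ⟨(Complex.neg_pi_lt_arg w).le, Complex.arg_le_pi w⟩
  have hyval : |y| = r * Real.sin |w.arg| := by
    have h1 : Real.sin w.arg = y / r := Complex.sin_arg w
    have h2 : y = r * Real.sin w.arg := by rw [h1]; field_simp
    rw [h2, abs_mul, abs_of_pos hr0,
      abs_sin_eq_sin_abs (Complex.neg_pi_lt_arg w).le (Complex.arg_le_pi w)]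
  -- region facts
  have hregion : r ≤ M ∧ |y| ≤ π := by
    rcases hreg with hA' | ⟨hB1, hB2⟩
    · rw [← hr] at hA'
      constructor
      · linarith
      · linarith [hyr]
    · rw [← hr] at hB2
      have hargeq : |w.arg| = θ := by rw [hargw]; exact hB1
      have hrM : r ≤ M := by rw [hMdef, le_div_iff₀ hs]; exact hB2
      refine ⟨hrM, ?_⟩
      rw [hyval, hargeq, ← hsdef]
      exact hB2
  obtain ⟨hrM, hyπ⟩ := hregion
  have hxM : -M ≤ x ∧ x ≤ M := by
    constructor <;> [linarith [neg_abs_le x]; linarith [le_abs_self x]]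
  -- F4
  have hF4 : x < 0 → s * (-x) ≤ |y| := by
    intro hx
    have hcosarg : Real.cos w.arg < 0 := by
      rw [Complex.cos_arg hw0, ← hxdef, ← hrdef]
      exact div_neg_of_neg_of_pos hx hr0
    have h1 : π / 2 < |w.arg| := by
      by_contra hcon
      push_neg at hcon
      have := Real.cos_nonneg_of_neg_pi_div_two_le_of_le (x := w.arg)
        (by linarith [neg_abs_le w.arg]) (by linarith [le_abs_self w.arg])
      linarith
    have h2 : s ≤ Real.sin |w.arg| := by
      have e1 : Real.sin |w.arg| = Real.sin (π - |w.arg|) := (Real.sin_pi_sub _).symm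
      have e2 : s = Real.sin (π - θ) := by rw [Real.sin_pi_sub]
      rw [e1, e2]
      exact Real.strictMonoOn_sin.monotoneOn
        (Set.mem_Icc.mpr ⟨by linarith, by linarith⟩)
        (Set.mem_Icc.mpr ⟨by linarith, by linarith⟩) (by linarith)
    have h3 : r * s ≤ |y| := by
      rw [hyval]
      exact mul_le_mul_of_nonneg_left h2 hr0.le
    nlinarith [neg_abs_le x]
  set u : ℂ := 1 - Complex.exp (-w) with hudef
  have hure : u.re = 1 - Real.exp (-x) * Real.cos y := by
    rw [hudef]
    simp [Complex.sub_re, Complex.exp_re, Complex.neg_re, Complex.neg_im, Real.cos_neg,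
      ← hxdef, ← hydef]
  have huim : u.im = Real.exp (-x) * Real.sin y := by
    rw [hudef]
    simp [Complex.sub_im, Complex.exp_im, Complex.neg_re, Complex.neg_im, Real.sin_neg,
      ← hxdef, ← hydef]
  have habse : ‖Complex.exp (-w)‖ = Real.exp (-x) := by
    rw [Complex.norm_exp, Complex.neg_re]
  have hexM : Real.exp (-x) ≤ Real.exp M := Real.exp_le_exp.mpr (by linarith [hxM.1])
  have hexmM : Real.exp (-M) ≤ Real.exp (-x) := Real.exp_le_exp.mpr (by linarith [hxM.2])
  -- key1
  have key1 : ‖u - w‖ ≤ c * r ^ 2 := by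
    have hid : u - w = -(Complex.exp (-w) - 1 - (-w)) := by rw [hudef]; ring
    rcases le_or_gt r 1 with h1 | h1
    · have hb := Complex.norm_exp_sub_one_sub_id_le (x := -w)
        (by rwa [norm_neg, ← hrdef])
      rw [norm_neg, ← hrdef] at hb
      rw [hid, norm_neg]
      nlinarith
    · have htri : ‖u - w‖ ≤ Real.exp (-x) + 1 + r := by
        calc ‖u - w‖ ≤ ‖u‖ + ‖w‖ := by
              apply norm_sub_le
          _ ≤ (‖(1 : ℂ)‖ + ‖Complex.exp (-w)‖) + r := by
              rw [hudef, ← hrdef]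
              gcongr
              apply norm_sub_le
          _ = Real.exp (-x) + 1 + r := by rw [habse, norm_one]; ring
      have h8 : Real.exp (-x) + 1 + r ≤ c := by rw [hcdef]; linarith
      have h9 : (1:ℝ) * 1 ≤ r * r := mul_le_mul h1.le h1.le one_pos.le (by linarith)
      have h10 : c * 1 ≤ c * r ^ 2 := by
        apply mul_le_mul_of_nonneg_left _ hc0.le
        rw [pow_two]; linarith
      linarith
  -- key2 : lower bound
  have key2 : c₁ * r ≤ ‖u‖ := by
    rcases le_or_gt (Real.cos y) 0 with hcy | hcy
    · have h1 : (1:ℝ) ≤ u.re := by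
        rw [hure]
        nlinarith [Real.exp_pos (-x)]
      have h2 : u.re ≤ ‖u‖ := Complex.re_le_norm u
      have h3 : c₁ * r ≤ 1 := by
        calc c₁ * r ≤ (1 / M) * M := by
              apply mul_le_mul hc₁M hrM hr0.le (by positivity)
          _ = 1 := by field_simp
      linarith
    · have hy2 : |y| < π / 2 := by
        by_contra hcon
        push_neg at hcon
        have := Real.cos_nonpos_of_pi_div_two_le_of_le hcon (by linarith)
        rw [Real.cos_abs] at this
        linarith
      have h1 : Real.exp (-M) * |x| ≤ ‖u‖ := by
        have htri : |(1:ℝ) - Real.exp (-x)| ≤ ‖u‖ := by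
          have := abs_norm_sub_norm_le (1 : ℂ) (Complex.exp (-w))
          rwa [norm_one, habse, ← hudef] at this
        have hb : Real.exp (-M) * |x| ≤ |(1:ℝ) - Real.exp (-x)| := by
          rcases le_or_gt 0 x with hx | hx
          · have e1 : Real.exp (-x) ≤ 1 := by
              calc Real.exp (-x) ≤ Real.exp 0 := Real.exp_le_exp.mpr (by linarith)
                _ = 1 := Real.exp_zero
            have e2 : Real.exp (-x) * Real.exp x = 1 := by
              rw [← Real.exp_add]; simp
            have e3 : Real.exp (-x) * (x + 1) ≤ Real.exp (-x) * Real.exp x :=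
              mul_le_mul_of_nonneg_left (Real.add_one_le_exp x) (Real.exp_pos _).le
            have e4 : Real.exp (-M) * x ≤ Real.exp (-x) * x :=
              mul_le_mul_of_nonneg_right hexmM hx
            rw [abs_of_nonneg hx, abs_of_nonneg (by linarith)]
            linarith [e2, e3, e4]
          · have e1 : (1:ℝ) ≤ Real.exp (-x) := by
              calc (1:ℝ) = Real.exp 0 := Real.exp_zero.symm
                _ ≤ Real.exp (-x) := Real.exp_le_exp.mpr (by linarith)
            have e2 : (-x) + 1 ≤ Real.exp (-x) := Real.add_one_le_exp (-x)
            have e3 : Real.exp (-M) ≤ 1 := by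
              calc Real.exp (-M) ≤ Real.exp 0 := Real.exp_le_exp.mpr (by linarith)
                _ = 1 := Real.exp_zero
            rw [abs_of_neg hx, abs_of_nonpos (by linarith)]
            have e4 : Real.exp (-M) * (-x) ≤ 1 * (-x) :=
              mul_le_mul_of_nonneg_right e3 (by linarith)
            linarith
        linarith
      have h2 : Real.exp (-M) * (2 / π * |y|) ≤ ‖u‖ := by
        have e1 : |u.im| ≤ ‖u‖ := Complex.abs_im_le_norm u
        have e2 : |u.im| = Real.exp (-x) * Real.sin |y| := by
          rw [huim, abs_mul, abs_of_pos (Real.exp_pos _),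
            abs_sin_eq_sin_abs (t := y) (by linarith [neg_abs_le y])
              (by linarith [le_abs_self y])]
        have e3 : 2 / π * |y| ≤ Real.sin |y| := Real.mul_le_sin (abs_nonneg y) hy2.le
        have e4 : Real.exp (-M) * (2 / π * |y|) ≤ Real.exp (-x) * Real.sin |y| := by
          apply mul_le_mul hexmM e3 (by positivity) (Real.exp_pos _).le
        linarith
      have hsum : r ≤ |x| + |y| := Complex.norm_le_abs_re_add_abs_im w
      have hπ2 : (2:ℝ) ≤ π := by linarith
      rcases le_total |x| |y| with hm | hm
      · calc c₁ * r ≤ (Real.exp (-M) / π) * (2 * |y|) :=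
              mul_le_mul hc₁π (by linarith) hr0.le (by positivity)
          _ = Real.exp (-M) * (2 / π * |y|) := by ring
          _ ≤ ‖u‖ := h2
      · calc c₁ * r ≤ (Real.exp (-M) / π) * (2 * |x|) :=
              mul_le_mul hc₁π (by linarith) hr0.le (by positivity)
          _ ≤ (Real.exp (-M) / π) * (π * |x|) := by
              apply mul_le_mul_of_nonneg_left _ (by positivity)
              exact mul_le_mul_of_nonneg_right hπ2 (abs_nonneg x)
          _ = Real.exp (-M) * |x| := by field_simp
          _ ≤ ‖u‖ := h1
  -- key3 : upper bound
  have key3 : ‖u‖ ≤ c₂ * r := by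
    have h1 : ‖u‖ ≤ ‖u - w‖ + ‖w‖ := by
      calc ‖u‖ = ‖u - w + w‖ := by ring_nf
        _ ≤ ‖u - w‖ + ‖w‖ := norm_add_le _ _
    have h2 : c * r ^ 2 ≤ c * M * r := by
      have := mul_le_mul_of_nonneg_right (mul_le_mul_of_nonneg_left hrM hc0.le) hr0.le
      nlinarith [this]
    have h3 : c₂ * r = c * M * r + r := by rw [hc₂def]; ring
    rw [← hrdef] at h1
    linarith
  -- key4 : sector fact
  have key4 : -(A * |u.im|) ≤ u.re := by
    have hcos1 : Real.cos y ≤ 1 := Real.cos_le_one y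
    have hex0 : 0 < Real.exp (-x) := Real.exp_pos _
    rcases le_or_gt 0 x with hx | hx
    · have e1 : Real.exp (-x) ≤ 1 := by
        calc Real.exp (-x) ≤ Real.exp 0 := Real.exp_le_exp.mpr (by linarith)
          _ = 1 := Real.exp_zero
      have e2 : Real.exp (-x) * Real.cos y ≤ 1 := by
        have := mul_le_mul_of_nonneg_left hcos1 hex0.le
        rw [mul_one] at this
        linarith
      have e3 : 0 ≤ A * |u.im| := by positivity
      rw [hure]; linarith
    · rcases le_or_gt (Real.cos y) 0 with hcy | hcy
      · have e2 : Real.exp (-x) * Real.cos y ≤ 0 := mul_nonpos_of_nonneg_of_nonpos hex0.le hcy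
        have e3 : 0 ≤ A * |u.im| := by positivity
        rw [hure]; linarith
      · have hy2 : |y| < π / 2 := by
          by_contra hcon
          push_neg at hcon
          have := Real.cos_nonpos_of_pi_div_two_le_of_le hcon (by linarith)
          rw [Real.cos_abs] at this
          linarith
        have e2 : s * (-x) ≤ |y| := hF4 hx
        have e3 : 2 / π * |y| ≤ Real.sin |y| := Real.mul_le_sin (abs_nonneg y) hy2.le
        have e4 : |u.im| = Real.exp (-x) * Real.sin |y| := by
          rw [huim, abs_mul, abs_of_pos hex0,
            abs_sin_eq_sin_abs (t := y) (by linarith [neg_abs_le y])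
              (by linarith [le_abs_self y])]
        have s1 : 1 - Real.exp x ≤ A * Real.sin |y| := by
          have a1 : A * (2 / π * |y|) ≤ A * Real.sin |y| :=
            mul_le_mul_of_nonneg_left e3 hA0.le
          have a2 : A * (2 / π * |y|) = |y| / s := by
            rw [hAdef]; field_simp
          have a3 : -x ≤ |y| / s := by rw [le_div_iff₀ hs]; linarith [hF4 hx]
          have a4 : 1 - Real.exp x ≤ -x := by linarith [Real.add_one_le_exp x]
          linarith
        have s2 : Real.exp (-x) * (1 - Real.exp x) ≤ Real.exp (-x) * (A * Real.sin |y|) :=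
          mul_le_mul_of_nonneg_left s1 hex0.le
        have s3 : Real.exp (-x) * Real.exp x = 1 := by rw [← Real.exp_add]; simp
        have s4 : Real.exp (-x) * Real.cos y ≤ Real.exp (-x) := by
          have := mul_le_mul_of_nonneg_left hcos1 hex0.le
          rw [mul_one] at this
          linarith
        rw [hure, e4]
        linarith [s2, s3, s4]
  -- assemble
  have hu0 : u ≠ 0 := by
    intro hcon
    have hpos : (0:ℝ) < c₁ * r := mul_pos hc₁0 hr0
    rw [hcon, norm_zero] at key2
    linarith
  have habsdiv : ‖u / (τ : ℂ)‖ = ‖u‖ / τ := by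
    rw [norm_div, Complex.norm_real, Real.norm_eq_abs, abs_of_pos hτ]
  have hargdiv : (u / (τ : ℂ)).arg = u.arg := by
    have h1 : u / (τ : ℂ) = ((τ⁻¹ : ℝ) : ℂ) * u := by
      rw [Complex.ofReal_inv]
      field_simp
    rw [h1]
    exact Complex.arg_real_mul u (inv_pos.mpr hτ)
  refine ⟨?_, ?_, ?_, div_ne_zero hu0 hτ0, ?_⟩
  · have hzw : z = w / (τ : ℂ) := by rw [hwdef]; field_simp
    have hdiff : u / (τ : ℂ) - z = (u - w) / (τ : ℂ) := by
      rw [hzw, div_sub_div_same]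
    rw [hdiff, norm_div, Complex.norm_real, Real.norm_eq_abs, abs_of_pos hτ, div_le_iff₀ hτ]
    calc ‖u - w‖ ≤ c * r ^ 2 := key1
      _ = c * ‖z‖ ^ 2 * τ * τ := by rw [hr]; ring
  · rw [habsdiv, le_div_iff₀ hτ]
    calc c₁ * ‖z‖ * τ = c₁ * r := by rw [hr]; ring
      _ ≤ ‖u‖ := key2
  · rw [habsdiv, div_le_iff₀ hτ]
    calc ‖u‖ ≤ c₂ * r := key3
      _ = c₂ * ‖z‖ * τ := by rw [hr]; ring
  · rw [hargdiv]
    exact sector_bound hA0.le hu0 key4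
end

section
/- Let μ : [0,1] → ℝ be continuous and nonnegative with μ(0) > 0 and μ(1) > 0, let θ ∈ (π/2, π) and τ > 0, and define χ(z) = (1 − e^{−zτ})/τ. Let Γ_τ denote the set of z ∈ ℂ with z ≠ 0, |arg z| ≤ θ, and either |z|·τ ≤ 1, or |arg z| = θ and |z|·τ·sin θ ≤ π. Then there exists a constant c > 0, depending only on θ and μ but not on τ, such that for all z ∈ Γ_τ: |χ(z)·w(χ(z)) − z·w(z)| ≤ c·τ·|z|²·w(|z|), where w(|z|) = ∫₀¹ |z|^(α−1) μ(α) dα. -/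
open Real MeasureTheory

lemma abs_cpow_real' {x : ℂ} (hx : x ≠ 0) (r : ℝ) :
    ‖x ^ (r:ℂ)‖ = ‖x‖ ^ r := by
  rw [Complex.norm_cpow_of_ne_zero hx]
  simp

lemma chi_ne_zero' {τ : ℝ} (hτ : 0 < τ) {z : ℂ} (hz : z ≠ 0) {θ : ℝ} (hθπ : π/2 < θ)
    (hcase : ‖z‖ * τ ≤ 1 ∨ (|z.arg| = θ ∧ ‖z‖ * τ * Real.sin θ ≤ π)) :
    (1 - Complex.exp (-z * (τ:ℂ))) / (τ:ℂ) ≠ 0 := by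
  have hτ0 : (τ:ℂ) ≠ 0 := by exact_mod_cast hτ.ne'
  rw [div_ne_zero_iff]
  refine ⟨fun h => ?_, hτ0⟩
  have he : Complex.exp (-z * τ) = 1 := by linear_combination -h
  obtain ⟨n, hn⟩ := Complex.exp_eq_one_iff.mp he
  rcases eq_or_ne n 0 with rfl | hn0
  · simp [hz, hτ.ne'] at hn
  · have hzval : z = ((-(2*π*(n:ℝ))/τ : ℝ) : ℂ) * Complex.I := by
      push_cast
      rw [div_mul_eq_mul_div, eq_div_iff hτ0]
      linear_combination -hn
    set r : ℝ := -(2*π*(n:ℝ))/τ with hr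
    have hncast : ((n:ℝ)) ≠ 0 := Int.cast_ne_zero.mpr hn0
    have hr0 : r ≠ 0 := by
      apply div_ne_zero _ hτ.ne'
      simp only [neg_ne_zero]
      positivity
    have habs : ‖z‖ = |r| := by
      rw [hzval, norm_mul, Complex.norm_I, mul_one, Complex.norm_real, Real.norm_eq_abs]
    have harg : |z.arg| = π/2 := by
      rcases lt_or_gt_of_ne hr0 with hrneg | hrpos
      · have h3 : z = ((-r : ℝ):ℂ) * (-Complex.I) := by rw [hzval]; push_cast; ring
        rw [h3, Complex.arg_real_mul _ (by linarith), Complex.arg_neg_I]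
        rw [abs_neg, abs_of_pos (by positivity)]
      · rw [hzval, Complex.arg_real_mul _ hrpos, Complex.arg_I,
          abs_of_pos (by positivity)]
    have habs2 : |r| * τ ≥ 2 * π := by
      have h4 : |r| = 2*π*|(n:ℝ)|/τ := by
        rw [hr, abs_div, abs_of_pos hτ]; congr 1
        rw [abs_neg, abs_mul]; congr 1
        rw [abs_of_pos (by positivity)]
      rw [h4, div_mul_cancel₀ _ hτ.ne']
      have h5 : (1:ℝ) ≤ |(n:ℝ)| := by
        rw [← Int.cast_abs]; exact_mod_cast Int.one_le_abs hn0
      nlinarith [Real.pi_pos]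
    rcases hcase with hc1 | hc2
    · rw [habs] at hc1
      nlinarith [Real.pi_gt_three]
    · rw [harg] at hc2
      linarith [hc2.1]

lemma key' {θ : ℝ} (hθ : θ ∈ Set.Ioo (π/2) π) :
    ∃ c₀ > 0, ∀ τ : ℝ, 0 < τ → ∀ z : ℂ, z ≠ 0 → |z.arg| ≤ θ →
      (‖z‖ * τ ≤ 1 ∨ (|z.arg| = θ ∧ ‖z‖ * τ * Real.sin θ ≤ π)) →
      ∀ α : ℝ, α ∈ Set.Icc (0:ℝ) 1 →
        ‖((1 - Complex.exp (-z * (τ:ℂ))) / (τ:ℂ)) ^ ((α:ℂ)) - z ^ ((α:ℂ))‖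
          ≤ c₀ * (‖z‖ * τ) * ‖z‖ ^ α := by
  obtain ⟨hθ1, hθ2⟩ := hθ
  have hπθ : 0 < π - θ := by linarith
  set δ : ℝ := min (1/4) ((π - θ)/4) with hδdef
  have hδ0 : 0 < δ := lt_min (by norm_num) (by linarith)
  have hδ1 : δ ≤ 1/4 := min_le_left _ _
  have hδ2 : δ ≤ (π-θ)/4 := min_le_right _ _
  have hsin : 0 < Real.sin θ := Real.sin_pos_of_pos_of_lt_pi (by linarith [Real.pi_pos]) hθ2
  set M : ℝ := max 1 (π / Real.sin θ) with hMdef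
  set K : ℝ := (1 + Real.exp M)/δ with hKdef
  have hK0 : 0 < K := by positivity
  refine ⟨3 + (max 1 K + 1)/δ, by positivity, ?_⟩
  intro τ hτ z hz harg hcase α hα
  have hτC : (τ:ℂ) ≠ 0 := by exact_mod_cast hτ.ne'
  set a : ℝ := ‖z‖ * τ with hadef
  have habsz : 0 < ‖z‖ := by
    simpa [norm_pos_iff] using hz
  have ha0 : 0 < a := by positivity
  have haM : a ≤ M := by
    rcases hcase with hc1 | hc2
    · exact le_trans hc1 (le_max_left _ _)
    · refine le_trans ?_ (le_max_right _ _)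
      rw [le_div_iff₀ hsin]
      exact hc2.2
  set χ : ℂ := (1 - Complex.exp (-z * (τ:ℂ))) / (τ:ℂ) with hχdef
  have hχ : χ ≠ 0 := chi_ne_zero' hτ hz hθ1 hcase
  have hX : ‖z * (τ:ℂ)‖ = a := by
    simp [hadef, abs_of_pos hτ]
  have hzα : ‖z ^ ((α:ℂ))‖ = ‖z‖ ^ α := abs_cpow_real' hz α
  have hrpow_pos : 0 < ‖z‖ ^ α := Real.rpow_pos_of_pos habsz α
  have hq0 : (0:ℝ) ≤ (max 1 K + 1)/δ := by positivity
  rcases le_or_gt a δ with hfine | hcoarse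
  · -- fine case
    have ha1 : a ≤ 1/4 := le_trans hfine hδ1
    have hzτ : z * (τ:ℂ) ≠ 0 := mul_ne_zero hz hτC
    set u : ℂ := (1 - Complex.exp (-z*(τ:ℂ))) / (z * (τ:ℂ)) with hudef
    have hu1 : ‖u - 1‖ ≤ a := by
      have heq : u - 1 = (1 - Complex.exp (-z*(τ:ℂ)) - z*(τ:ℂ)) / (z*(τ:ℂ)) := by
        rw [hudef, div_sub_one hzτ]
      have heq2 : 1 - Complex.exp (-z*(τ:ℂ)) - z*(τ:ℂ)
          = -(Complex.exp (-(z*(τ:ℂ))) - 1 - (-(z*(τ:ℂ)))) := by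
        rw [neg_mul]; ring
      have habsneg : ‖-(z*(τ:ℂ))‖ = a := by rw [norm_neg, hX]
      have hexp : ‖Complex.exp (-(z*(τ:ℂ))) - 1 - (-(z*(τ:ℂ)))‖ ≤ a^2 := by
        have h := Complex.norm_exp_sub_one_sub_id_le (x := -(z*(τ:ℂ)))
          (by rw [habsneg]; linarith)
        rwa [habsneg] at h
      rw [heq, heq2, norm_div, norm_neg, hX, div_le_iff₀ ha0]
      calc ‖Complex.exp (-(z * (τ:ℂ))) - 1 - (-(z * (τ:ℂ)))‖ ≤ a^2 := hexp
        _ = a * a := sq a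
    have hu0 : u ≠ 0 := by
      intro h0
      rw [h0] at hu1
      norm_num at hu1
      linarith
    have hlogu : ‖Complex.log u‖ ≤ 3/2 * a := by
      have h := Complex.norm_log_one_add_half_le_self (z := u - 1)
        (by linarith)
      have he : (1:ℂ) + (u - 1) = u := by ring
      rw [he] at h
      calc ‖Complex.log u‖ ≤ 3/2 * ‖u-1‖ := h
        _ ≤ 3/2 * a := by linarith
    have hargu : |u.arg| ≤ 3/2 * a := by
      rw [← Complex.log_im]
      exact le_trans (Complex.abs_im_le_norm _) hlogu
    have hchi_eq : χ = z * u := by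
      rw [hχdef, hudef]
      field_simp
    have hmem : z.arg + u.arg ∈ Set.Ioc (-π) π := by
      have h1 := abs_le.mp harg
      have h2 := abs_le.mp hargu
      have h3 : (3:ℝ)/2 * a ≤ (π - θ)/2 := by linarith
      simp only [Set.mem_Ioc]
      constructor
      · linarith [h1.1, h2.1]
      · linarith [h1.2, h2.2]
    have hlogmul : Complex.log χ = Complex.log z + Complex.log u := by
      rw [hchi_eq]
      exact Complex.log_mul hz hu0 hmem
    have hformula : χ ^ ((α:ℂ)) - z ^ ((α:ℂ))
        = Complex.exp (Complex.log z * α) * (Complex.exp (Complex.log u * α) - 1) := by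
      rw [Complex.cpow_def_of_ne_zero hχ, Complex.cpow_def_of_ne_zero hz, hlogmul,
        add_mul, Complex.exp_add]
      ring
    rw [hformula, norm_mul]
    have h1 : ‖Complex.exp (Complex.log z * α)‖ = ‖z‖ ^ α := by
      rw [Complex.norm_exp, Real.rpow_def_of_pos habsz]
      congr 1
      simp [Complex.mul_re, Complex.log_re]
    have h2 : ‖Complex.exp (Complex.log u * α) - 1‖ ≤ 3 * a := by
      have hb : ‖Complex.log u * α‖ ≤ 3/2 * a := by
        rw [norm_mul, Complex.norm_real, Real.norm_eq_abs, abs_of_nonneg hα.1]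
        calc ‖Complex.log u‖ * α ≤ (3/2 * a) * 1 :=
              mul_le_mul hlogu hα.2 hα.1 (by positivity)
          _ = 3/2 * a := mul_one _
      have h3 := Complex.norm_exp_sub_one_le (x := Complex.log u * α) (by linarith)
      linarith
    rw [h1]
    calc ‖z‖ ^ α * ‖Complex.exp (Complex.log u * α) - 1‖
        ≤ ‖z‖ ^ α * (3 * a) := by
          exact mul_le_mul_of_nonneg_left h2 hrpow_pos.le
      _ ≤ (3 + (max 1 K + 1)/δ) * a * ‖z‖ ^ α := by
          nlinarith [mul_nonneg (mul_nonneg hq0 ha0.le) hrpow_pos.le]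
  · -- coarse case
    have habse : ‖Complex.exp (-z*(τ:ℂ))‖ ≤ Real.exp M := by
      rw [Complex.norm_exp]
      apply Real.exp_le_exp.mpr
      calc (-z*(τ:ℂ)).re ≤ ‖-z*(τ:ℂ)‖ := Complex.re_le_norm _
        _ = a := by rw [neg_mul, norm_neg, hX]
        _ ≤ M := haM
    have habsχ : ‖χ‖ ≤ K * ‖z‖ := by
      rw [hχdef, norm_div, Complex.norm_real, Real.norm_eq_abs, abs_of_pos hτ, div_le_iff₀ hτ]
      have hn : ‖1 - Complex.exp (-z*(τ:ℂ))‖ ≤ 1 + Real.exp M := by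
        calc ‖1 - Complex.exp (-z*(τ:ℂ))‖
            ≤ ‖1‖ + ‖Complex.exp (-z*(τ:ℂ))‖ :=
              norm_sub_le _ _
          _ ≤ 1 + Real.exp M := by rw [norm_one]; linarith
      have h5 : (1 + Real.exp M)/δ * δ ≤ (1 + Real.exp M)/δ * a :=
        mul_le_mul_of_nonneg_left hcoarse.le (by positivity)
      rw [div_mul_cancel₀ _ hδ0.ne'] at h5
      have h6 : K * ‖z‖ * τ = K * a := by rw [hadef]; ring
      rw [h6]
      calc ‖1 - Complex.exp (-z*(τ:ℂ))‖ ≤ 1 + Real.exp M := hn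
        _ ≤ K * a := h5
    have h1 : ‖χ ^ ((α:ℂ))‖ ≤ max 1 K * ‖z‖ ^ α := by
      rw [abs_cpow_real' hχ]
      have hKα : ‖χ‖ ^ α ≤ (K * ‖z‖) ^ α :=
        Real.rpow_le_rpow (norm_nonneg _) habsχ hα.1
      rw [Real.mul_rpow hK0.le (norm_nonneg _)] at hKα
      have hKK : K ^ α ≤ max 1 K := by
        rcases le_total K 1 with h | h
        · exact le_trans (Real.rpow_le_one hK0.le h hα.1) (le_max_left _ _)
        · refine le_trans ?_ (le_max_right _ _)
          calc K ^ α ≤ K ^ (1:ℝ) := Real.rpow_le_rpow_of_exponent_le h hα.2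
            _ = K := Real.rpow_one K
      calc ‖χ‖ ^ α ≤ K ^ α * ‖z‖ ^ α := hKα
        _ ≤ max 1 K * ‖z‖ ^ α := mul_le_mul_of_nonneg_right hKK hrpow_pos.le
    have hsub : ‖χ ^ ((α:ℂ)) - z ^ ((α:ℂ))‖
        ≤ max 1 K * ‖z‖ ^ α + ‖z‖ ^ α := by
      calc ‖χ ^ ((α:ℂ)) - z ^ ((α:ℂ))‖
          ≤ ‖χ ^ ((α:ℂ))‖ + ‖z ^ ((α:ℂ))‖ :=
            norm_sub_le _ _
        _ ≤ max 1 K * ‖z‖ ^ α + ‖z‖ ^ α := by rw [hzα]; linarith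
    have h7 : (max 1 K + 1) * δ ≤ (max 1 K + 1) * a :=
      mul_le_mul_of_nonneg_left hcoarse.le (by positivity)
    have h8 : max 1 K + 1 ≤ (max 1 K + 1)/δ * a := by
      rw [div_mul_eq_mul_div, le_div_iff₀ hδ0]
      linarith
    calc ‖χ ^ ((α:ℂ)) - z ^ ((α:ℂ))‖
        ≤ max 1 K * ‖z‖ ^ α + ‖z‖ ^ α := hsub
      _ = (max 1 K + 1) * ‖z‖ ^ α := by ring
      _ ≤ ((max 1 K + 1)/δ * a) * ‖z‖ ^ α :=
          mul_le_mul_of_nonneg_right h8 hrpow_pos.le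
      _ ≤ (3 + (max 1 K + 1)/δ) * a * ‖z‖ ^ α := by
          nlinarith [mul_nonneg (mul_nonneg (by norm_num : (0:ℝ) ≤ 3) ha0.le) hrpow_pos.le]

theorem stmt_14 (μ : ℝ → ℝ) (hc : ContinuousOn μ (Set.Icc 0 1))
    (hnn : ∀ α ∈ Set.Icc (0:ℝ) 1, 0 ≤ μ α) (h0 : 0 < μ 0) (h1 : 0 < μ 1)
    (θ : ℝ) (hθ : θ ∈ Set.Ioo (π / 2) π) :
    ∃ c > 0, ∀ τ : ℝ, 0 < τ → ∀ z : ℂ, z ≠ 0 → |z.arg| ≤ θ →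
      (‖z‖ * τ ≤ 1 ∨ (|z.arg| = θ ∧ ‖z‖ * τ * Real.sin θ ≤ π)) →
      ‖(1 - Complex.exp (-z * (τ : ℂ))) / (τ : ℂ) *
            w μ ((1 - Complex.exp (-z * (τ : ℂ))) / (τ : ℂ)) - z * w μ z‖ ≤
        c * τ * ‖z‖ ^ 2 *
          ∫ α in (0:ℝ)..1, ‖z‖ ^ (α - 1) * μ α := by
  obtain ⟨c₀, hc₀, hkey⟩ := key' hθ
  refine ⟨c₀, hc₀, ?_⟩
  intro τ hτ z hz harg hcase
  set χ : ℂ := (1 - Complex.exp (-z * (τ:ℂ))) / (τ:ℂ) with hχdef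
  have hχ : χ ≠ 0 := chi_ne_zero' hτ hz hθ.1 hcase
  have habsz : 0 < ‖z‖ := by simpa [norm_pos_iff] using hz
  have hμc : ContinuousOn (fun α : ℝ => ((μ α : ℝ) : ℂ)) (Set.Icc 0 1) :=
    Complex.continuous_ofReal.comp_continuousOn hc
  have hcont1 : ∀ (x : ℂ), x ≠ 0 → Continuous (fun α : ℝ => x ^ ((α:ℂ) - 1)) := by
    intro x hx
    have heq : (fun α : ℝ => x ^ ((α:ℂ)-1))
        = fun α : ℝ => Complex.exp (Complex.log x * ((α:ℂ)-1)) := by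
      funext α; rw [Complex.cpow_def_of_ne_zero hx]
    rw [heq]
    exact Complex.continuous_exp.comp
      (continuous_const.mul (Complex.continuous_ofReal.sub continuous_const))
  have hcont2 : ∀ (x : ℂ), x ≠ 0 → Continuous (fun α : ℝ => x ^ ((α:ℂ))) := by
    intro x hx
    have heq : (fun α : ℝ => x ^ ((α:ℂ)))
        = fun α : ℝ => Complex.exp (Complex.log x * ((α:ℂ))) := by
      funext α; rw [Complex.cpow_def_of_ne_zero hx]
    rw [heq]
    exact Complex.continuous_exp.comp (continuous_const.mul Complex.continuous_ofReal)
  have hInt1 : ∀ (x : ℂ), x ≠ 0 →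
      IntervalIntegrable (fun α : ℝ => x ^ ((α:ℂ)-1) * (μ α : ℂ)) volume 0 1 := by
    intro x hx
    apply ContinuousOn.intervalIntegrable
    rw [Set.uIcc_of_le (by norm_num : (0:ℝ) ≤ 1)]
    exact ((hcont1 x hx).continuousOn).mul hμc
  have hInt2 : ∀ (x : ℂ), x ≠ 0 →
      IntervalIntegrable (fun α : ℝ => x ^ ((α:ℂ)) * (μ α : ℂ)) volume 0 1 := by
    intro x hx
    apply ContinuousOn.intervalIntegrable
    rw [Set.uIcc_of_le (by norm_num : (0:ℝ) ≤ 1)]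
    exact ((hcont2 x hx).continuousOn).mul hμc
  have hstep : ∀ (x : ℂ), x ≠ 0 →
      x * w μ x = ∫ α in (0:ℝ)..1, x ^ ((α:ℂ)) * (μ α : ℂ) := by
    intro x hx
    rw [w, ← intervalIntegral.integral_const_mul]
    apply intervalIntegral.integral_congr
    intro α _
    have hα : (α:ℂ) = ((α:ℂ)-1) + 1 := by ring
    show x * (x ^ ((α:ℂ)-1) * (μ α : ℂ)) = x ^ ((α:ℂ)) * (μ α : ℂ)
    rw [← mul_assoc]
    congr 1
    rw [hα, Complex.cpow_add _ _ hx, Complex.cpow_one]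
    ring
  have hdiff : χ * w μ χ - z * w μ z
      = ∫ α in (0:ℝ)..1, (χ ^ ((α:ℂ)) - z ^ ((α:ℂ))) * (μ α : ℂ) := by
    rw [hstep χ hχ, hstep z hz, ← intervalIntegral.integral_sub (hInt2 χ hχ) (hInt2 z hz)]
    apply intervalIntegral.integral_congr
    intro α _
    ring
  rw [hdiff]
  have hrw : ∀ α : ℝ, ‖z‖ ^ α = ‖z‖ ^ (α-1) * ‖z‖ := by
    intro α
    have : α = (α - 1) + 1 := by ring
    rw [this]
    rw [Real.rpow_add habsz, Real.rpow_one]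
    ring_nf
  have hptw : ∀ α ∈ Set.Icc (0:ℝ) 1,
      ‖(χ ^ ((α:ℂ)) - z ^ ((α:ℂ))) * (μ α : ℂ)‖
        ≤ c₀ * τ * ‖z‖ ^ 2 * (‖z‖ ^ (α-1) * μ α) := by
    intro α hα
    rw [norm_mul, Complex.norm_real, Real.norm_eq_abs, abs_of_nonneg (hnn α hα)]
    have hk := hkey τ hτ z hz harg hcase α hα
    calc ‖χ ^ ((α:ℂ)) - z ^ ((α:ℂ))‖ * μ α
        ≤ (c₀ * (‖z‖ * τ) * ‖z‖ ^ α) * μ α :=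
          mul_le_mul_of_nonneg_right hk (hnn α hα)
      _ = c₀ * τ * ‖z‖ ^ 2 * (‖z‖ ^ (α-1) * μ α) := by
          rw [hrw α, sq]
          ring
  have hIntNorm : IntervalIntegrable
      (fun α : ℝ => ‖(χ ^ ((α:ℂ)) - z ^ ((α:ℂ))) * (μ α : ℂ)‖) volume 0 1 := by
    apply ContinuousOn.intervalIntegrable
    rw [Set.uIcc_of_le (by norm_num : (0:ℝ) ≤ 1)]
    exact continuous_norm.comp_continuousOn
      ((((hcont2 χ hχ).continuousOn).sub ((hcont2 z hz).continuousOn)).mul hμc)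
  have hIntBound : IntervalIntegrable
      (fun α : ℝ => c₀ * τ * ‖z‖ ^ 2 * (‖z‖ ^ (α-1) * μ α)) volume 0 1 := by
    apply ContinuousOn.intervalIntegrable
    rw [Set.uIcc_of_le (by norm_num : (0:ℝ) ≤ 1)]
    apply ContinuousOn.mul continuousOn_const
    apply ContinuousOn.mul _ hc
    have heq : (fun α : ℝ => ‖z‖ ^ (α-1))
        = fun α : ℝ => Real.exp (Real.log (‖z‖) * (α-1)) := by
      funext α; rw [Real.rpow_def_of_pos habsz]
    rw [heq]
    exact (Real.continuous_exp.comp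
      (continuous_const.mul (continuous_id.sub continuous_const))).continuousOn
  calc ‖∫ α in (0:ℝ)..1, (χ ^ ((α:ℂ)) - z ^ ((α:ℂ))) * (μ α : ℂ)‖
      ≤ ∫ α in (0:ℝ)..1, ‖(χ ^ ((α:ℂ)) - z ^ ((α:ℂ))) * (μ α : ℂ)‖ := by
        have h := intervalIntegral.norm_integral_le_integral_norm
          (μ := volume) (f := fun α : ℝ => (χ ^ ((α:ℂ)) - z ^ ((α:ℂ))) * (μ α : ℂ))
          (a := (0:ℝ)) (b := 1) (by norm_num)
        exact h
    _ ≤ ∫ α in (0:ℝ)..1, c₀ * τ * ‖z‖ ^ 2 * (‖z‖ ^ (α-1) * μ α) :=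
        intervalIntegral.integral_mono_on (by norm_num) hIntNorm hIntBound hptw
    _ = c₀ * τ * ‖z‖ ^ 2 * ∫ α in (0:ℝ)..1, ‖z‖ ^ (α-1) * μ α :=
        intervalIntegral.integral_const_mul _ _
end
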